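/- arXiv:2411.17551 — 3 statements merged into one kernel-verified Lean document; each statement's English description precedes it below -/
import Mathlib

section
/- For a finite simple graph G = (V,E), the value (−1)^{|V|} χ_G(−1) equals the number of acyclic orientations of G. -/
open SimpleGraph Polynomial

/-- Number of proper colorings of `G` with `k` colors. -/
noncomputable def properColoringCount {V : Type*} (G : SimpleGraph V) (k : ℕ) : ℕ :=
  Nat.card {f : V → Fin k // ∀ u v, G.Adj u v → f u ≠ f v}

/-- `P` is the chromatic polynomial of `G`. -/
def IsChromaticPoly {V : Type*} (G : SimpleGraph V) (P : Polynomial ℤ) : Prop :=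
  ∀ k : ℕ, P.eval (k : ℤ) = properColoringCount G k

/-- `r` is an orientation of the simple graph `G`: every directed edge lies over an
edge of `G`, and every edge of `G` gets exactly one of its two directions. -/
def IsOrientation {V : Type*} (G : SimpleGraph V) (r : V → V → Prop) : Prop :=
  (∀ u v, r u v → G.Adj u v) ∧ (∀ u v, G.Adj u v → (r u v ↔ ¬ r v u))

/-- A directed relation is acyclic if it has no directed cycles. -/
def IsAcyclicRel {V : Type*} (r : V → V → Prop) : Prop :=
  ∀ v, ¬ Relation.TransGen r v v

/-- The number of acyclic orientations of `G`. -/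
noncomputable def acyclicOrientationCount {V : Type*} (G : SimpleGraph V) : ℕ :=
  Nat.card {r : V → V → Prop // IsOrientation G r ∧ IsAcyclicRel r}


open Relation

section Rel
universe uuu

variable {V : Type*} {σ : V → V → Prop} {u v : V}

lemma IsAcyclicRel.not_both (h : IsAcyclicRel σ) {a b : V}
    (h1 : Relation.TransGen σ a b) (h2 : Relation.TransGen σ b a) : False := h a (h1.trans h2)

lemma rt_ne_transGen {a b : V} (h : ReflTransGen σ a b) (hne : a ≠ b) : TransGen σ a b := by
  rcases reflTransGen_iff_eq_or_transGen.mp h with rfl | h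
  · exact absurd rfl hne
  · exact h

def plusR (σ : V → V → Prop) (a b : V) : V → V → Prop :=
  fun x y => σ x y ∨ (x = a ∧ y = b)

def restR (u v : V) (r : V → V → Prop) : V → V → Prop :=
  fun a b => r a b ∧ ¬(a = u ∧ b = v) ∧ ¬(a = v ∧ b = u)

lemma extend_acyclic (hσ : IsAcyclicRel σ) (hne : u ≠ v)
    (hvu : ¬ Relation.TransGen σ v u) : IsAcyclicRel (plusR σ u v) := by
  intro w hw
  have key : ∀ a b : V, TransGen (plusR σ u v) a b →
      TransGen σ a b ∨ (ReflTransGen σ a u ∧ ReflTransGen σ v b) := by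
    intro a b h
    induction h with
    | single h =>
      rcases h with h | ⟨rfl, rfl⟩
      · exact Or.inl (TransGen.single h)
      · exact Or.inr ⟨ReflTransGen.refl, ReflTransGen.refl⟩
    | tail hstep h ih =>
      rcases h with h | ⟨rfl, rfl⟩
      · rcases ih with ih | ⟨h1, h2⟩
        · exact Or.inl (ih.tail h)
        · exact Or.inr ⟨h1, h2.tail h⟩
      · rcases ih with ih | ⟨h1, h2⟩
        · exact Or.inr ⟨ih.to_reflTransGen, ReflTransGen.refl⟩
        · exact absurd (rt_ne_transGen h2 hne.symm) hvu
  rcases key w w hw with h | ⟨h1, h2⟩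
  · exact hσ w h
  · exact hvu (rt_ne_transGen (h2.trans h1) hne.symm)

lemma contract_acyclic (hσ : IsAcyclicRel σ) (hne : u ≠ v)
    (huv : ¬ Relation.TransGen σ u v) (hvu : ¬ Relation.TransGen σ v u) :
    IsAcyclicRel (fun x y => σ x y ∨ (x = u ∧ σ v y) ∨ (y = u ∧ σ x v)) := by
  intro w hw
  set σ' : V → V → Prop := fun x y => σ x y ∨ (x = u ∧ σ v y) ∨ (y = u ∧ σ x v) with hσ'
  have key : ∀ a b : V, TransGen σ' a b →
      TransGen σ a b ∨ (ReflTransGen σ a u ∧ ReflTransGen σ v b)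
        ∨ (ReflTransGen σ a v ∧ ReflTransGen σ u b) := by
    intro a b h
    induction h with
    | single h =>
      rcases h with h | ⟨rfl, h⟩ | ⟨rfl, h⟩
      · exact Or.inl (TransGen.single h)
      · exact Or.inr (Or.inl ⟨ReflTransGen.refl, (TransGen.single h).to_reflTransGen⟩)
      · exact Or.inr (Or.inr ⟨(TransGen.single h).to_reflTransGen, ReflTransGen.refl⟩)
    | @tail c b hstep h ih =>
      rcases h with h | ⟨rfl, h⟩ | ⟨rfl, h⟩
      · rcases ih with ih | ⟨h1, h2⟩ | ⟨h1, h2⟩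
        · exact Or.inl (ih.tail h)
        · exact Or.inr (Or.inl ⟨h1, h2.tail h⟩)
        · exact Or.inr (Or.inr ⟨h1, h2.tail h⟩)
      · rcases ih with ih | ⟨h1, h2⟩ | ⟨h1, h2⟩
        · exact Or.inr (Or.inl ⟨ih.to_reflTransGen, (TransGen.single h).to_reflTransGen⟩)
        · exact absurd (rt_ne_transGen h2 hne.symm) hvu
        · exact Or.inl (TransGen.tail' h1 h)
      · rcases ih with ih | ⟨h1, h2⟩ | ⟨h1, h2⟩
        · exact Or.inr (Or.inr ⟨(ih.tail h).to_reflTransGen, ReflTransGen.refl⟩)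
        · exact absurd (TransGen.tail' h2 h) (hσ v)
        · exact absurd (TransGen.tail' h2 h) huv
  rcases key w w hw with h | ⟨h1, h2⟩ | ⟨h1, h2⟩
  · exact hσ w h
  · exact hvu (rt_ne_transGen (h2.trans h1) hne.symm)
  · exact huv (rt_ne_transGen (h2.trans h1) hne)

end Rel

section Graphs2
universe uu
variable {V : Type uu} {G : SimpleGraph V} {u v : V}

def contractGraph (G : SimpleGraph V) (u v : V) : SimpleGraph {x : V // x ≠ v} where
  Adj a b := a ≠ b ∧ (G.Adj ↑a ↑b ∨ ((a : V) = u ∧ G.Adj v ↑b) ∨ ((b : V) = u ∧ G.Adj ↑a v))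
  symm := by
    refine ⟨?_⟩
    rintro a b ⟨hab, h | ⟨h1, h2⟩ | ⟨h1, h2⟩⟩
    · exact ⟨hab.symm, Or.inl h.symm⟩
    · exact ⟨hab.symm, Or.inr (Or.inr ⟨h1, h2.symm⟩)⟩
    · exact ⟨hab.symm, Or.inr (Or.inl ⟨h1, h2.symm⟩)⟩
  loopless := ⟨fun a => by simp⟩

lemma del_adj (G : SimpleGraph V) (u v : V) {a b : V} :
    (G.deleteEdges {s(u,v)}).Adj a b ↔
      G.Adj a b ∧ ¬(a = u ∧ b = v) ∧ ¬(a = v ∧ b = u) := by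
  rw [SimpleGraph.deleteEdges_adj, Set.mem_singleton_iff, Sym2.eq_iff]
  tauto

-- σ an orientation of the deleted graph never orients the pair u v
lemma orient_del_not_uv {σ : V → V → Prop}
    (hσ : IsOrientation (G.deleteEdges {s(u,v)}) σ) : ¬ σ u v ∧ ¬ σ v u := by
  constructor
  · intro h
    exact ((del_adj G u v).mp (hσ.1 u v h)).2.1 ⟨rfl, rfl⟩
  · intro h
    exact ((del_adj G u v).mp (hσ.1 v u h)).2.2 ⟨rfl, rfl⟩

lemma restrict_orient {r : V → V → Prop} (hr : IsOrientation G r) :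
    IsOrientation (G.deleteEdges {s(u,v)}) (restR u v r) := by
  constructor
  · rintro a b ⟨h, h1, h2⟩
    exact (del_adj G u v).mpr ⟨hr.1 a b h, h1, h2⟩
  · intro a b hab
    obtain ⟨hAdj, h1, h2⟩ := (del_adj G u v).mp hab
    have h1' : ¬(b = u ∧ a = v) := fun hh => h2 ⟨hh.2, hh.1⟩
    have h2' : ¬(b = v ∧ a = u) := fun hh => h1 ⟨hh.2, hh.1⟩
    have e1 : restR u v r a b ↔ r a b := by unfold restR; tauto
    have e2 : restR u v r b a ↔ r b a := by unfold restR; tauto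
    rw [e1, e2]
    exact hr.2 a b hAdj

lemma restrict_acyclic {r : V → V → Prop} (hr : IsAcyclicRel r) :
    IsAcyclicRel (restR u v r) := by
  intro w hw
  exact hr w ((TransGen.mono (fun a b h => h.1) : TransGen (restR u v r) ≤ TransGen r) w w hw)

lemma plus_orient (huv : G.Adj u v) {σ : V → V → Prop}
    (hσ : IsOrientation (G.deleteEdges {s(u,v)}) σ) : IsOrientation G (plusR σ u v) := by
  have hne : u ≠ v := huv.ne
  obtain ⟨huv1, hvu1⟩ := orient_del_not_uv hσ
  constructor
  · rintro a b (h | ⟨rfl, rfl⟩)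
    · exact ((del_adj G u v).mp (hσ.1 a b h)).1
    · exact huv
  · intro a b hab
    have e1 : plusR σ u v u v := Or.inr ⟨rfl, rfl⟩
    have e2 : ¬ plusR σ u v v u := by
      rintro (h | ⟨rfl, -⟩)
      · exact hvu1 h
      · exact hne rfl
    by_cases h1 : a = u ∧ b = v
    · rw [h1.1, h1.2]
      tauto
    · by_cases h2 : a = v ∧ b = u
      · rw [h2.1, h2.2]
        tauto
      · have hd : (G.deleteEdges {s(u,v)}).Adj a b := (del_adj G u v).mpr ⟨hab, h1, h2⟩
        have h1' : ¬(b = u ∧ a = v) := fun hh => h2 ⟨hh.2, hh.1⟩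
        have e0 := hσ.2 a b hd
        have e1 : plusR σ u v a b ↔ σ a b := by unfold plusR; tauto
        have e2 : plusR σ u v b a ↔ σ b a := by unfold plusR; tauto
        rw [e1, e2]
        exact e0

lemma plus_acyclic_no_path {σ : V → V → Prop} (h : IsAcyclicRel (plusR σ u v)) :
    ¬ Relation.TransGen σ v u := by
  intro hp
  have h1 : Relation.TransGen (plusR σ u v) v u := (TransGen.mono (fun a b h => Or.inl h) : TransGen σ ≤ TransGen (plusR σ u v)) v u hp
  exact h v (h1.tail (Or.inr ⟨rfl, rfl⟩))

lemma restrict_plus_uv {σ : V → V → Prop}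
    (hσ : IsOrientation (G.deleteEdges {s(u,v)}) σ) : restR u v (plusR σ u v) = σ := by
  obtain ⟨huv1, hvu1⟩ := orient_del_not_uv (u := u) (v := v) hσ
  funext a b
  apply propext
  unfold restR plusR
  constructor
  · rintro ⟨h | ⟨rfl, rfl⟩, h1, h2⟩
    · exact h
    · exact absurd ⟨rfl, rfl⟩ h1
  · intro h
    refine ⟨Or.inl h, ?_, ?_⟩
    · rintro ⟨rfl, rfl⟩; exact huv1 h
    · rintro ⟨rfl, rfl⟩; exact hvu1 h

lemma restrict_plus_vu {σ : V → V → Prop}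
    (hσ : IsOrientation (G.deleteEdges {s(u,v)}) σ) : restR u v (plusR σ v u) = σ := by
  obtain ⟨huv1, hvu1⟩ := orient_del_not_uv (u := u) (v := v) hσ
  funext a b
  apply propext
  unfold restR plusR
  constructor
  · rintro ⟨h | ⟨rfl, rfl⟩, h1, h2⟩
    · exact h
    · exact absurd ⟨rfl, rfl⟩ h2
  · intro h
    refine ⟨Or.inl h, ?_, ?_⟩
    · rintro ⟨rfl, rfl⟩; exact huv1 h
    · rintro ⟨rfl, rfl⟩; exact hvu1 h

lemma plus_restrict_uv {r : V → V → Prop} (huv : G.Adj u v) (hr : IsOrientation G r)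
    (h : r u v) : plusR (restR u v r) u v = r := by
  have hvu : ¬ r v u := (hr.2 u v huv).mp h
  funext a b
  apply propext
  unfold restR plusR
  constructor
  · rintro (⟨h', -, -⟩ | ⟨rfl, rfl⟩)
    · exact h'
    · exact h
  · intro h'
    by_cases h1 : a = u ∧ b = v
    · exact Or.inr h1
    · by_cases h2 : a = v ∧ b = u
      · obtain ⟨rfl, rfl⟩ := h2
        exact absurd h' hvu
      · exact Or.inl ⟨h', h1, h2⟩

lemma plus_restrict_vu {r : V → V → Prop} (huv : G.Adj u v) (hr : IsOrientation G r)
    (h : ¬ r u v) : plusR (restR u v r) v u = r := by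
  have hvu : r v u := by
    have := hr.2 u v huv
    tauto
  funext a b
  apply propext
  unfold restR plusR
  constructor
  · rintro (⟨h', -, -⟩ | ⟨rfl, rfl⟩)
    · exact h'
    · exact hvu
  · intro h'
    by_cases h1 : a = u ∧ b = v
    · obtain ⟨rfl, rfl⟩ := h1
      exact absurd h' h
    · by_cases h2 : a = v ∧ b = u
      · exact Or.inr ⟨h2.1, h2.2⟩
      · exact Or.inl ⟨h', h1, h2⟩

end Graphs2

section Split
universe uu
variable {V : Type uu} {G : SimpleGraph V} {u v : V}

lemma plus_orient' (huv : G.Adj u v) {σ : V → V → Prop}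
    (hσ : IsOrientation (G.deleteEdges {s(u,v)}) σ) : IsOrientation G (plusR σ v u) := by
  have hσ' : IsOrientation (G.deleteEdges {s(v,u)}) σ := by rwa [Sym2.eq_swap]
  exact plus_orient huv.symm hσ'

lemma not_plus_vu_uv (hne : u ≠ v) {σ : V → V → Prop}
    (hσ : IsOrientation (G.deleteEdges {s(u,v)}) σ) : ¬ plusR σ v u u v := by
  rintro (h | ⟨rfl, -⟩)
  · exact (orient_del_not_uv hσ).1 h
  · exact hne rfl

lemma card_orientation_split [Finite V] (huv : G.Adj u v) :
    Nat.card {r : V → V → Prop // IsOrientation G r ∧ IsAcyclicRel r} =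
      Nat.card {σ : V → V → Prop //
          IsOrientation (G.deleteEdges {s(u,v)}) σ ∧ IsAcyclicRel σ} +
      Nat.card {σ : V → V → Prop //
          (IsOrientation (G.deleteEdges {s(u,v)}) σ ∧ IsAcyclicRel σ) ∧
            ¬ Relation.TransGen σ u v ∧ ¬ Relation.TransGen σ v u} := by
  classical
  have hne : u ≠ v := huv.ne
  set Gd := G.deleteEdges {s(u,v)} with hGd
  let A := {r : V → V → Prop // IsOrientation G r ∧ IsAcyclicRel r}
  let B := {σ : V → V → Prop // IsOrientation Gd σ ∧ IsAcyclicRel σ}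
  let C := {σ : V → V → Prop // (IsOrientation Gd σ ∧ IsAcyclicRel σ) ∧
      ¬ Relation.TransGen σ u v ∧ ¬ Relation.TransGen σ v u}
  have memB : ∀ r : A, IsOrientation Gd (restR u v r.1) ∧ IsAcyclicRel (restR u v r.1) :=
    fun r => ⟨restrict_orient r.2.1, restrict_acyclic r.2.2⟩
  -- no u→v path in the restriction when the edge goes v→u
  have no_uv : ∀ r : A, ¬ r.1 u v → ¬ Relation.TransGen (restR u v r.1) u v := by
    rintro r hruv hTG
    have hvu : r.1 v u := by have := r.2.1.2 u v huv; tauto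
    have : Relation.TransGen r.1 u v :=
      (TransGen.mono (fun a b h => h.1) : TransGen (restR u v r.1) ≤ TransGen r.1) u v hTG
    exact r.2.2 u (this.tail hvu)
  have no_vu : ∀ r : A, r.1 u v → ¬ Relation.TransGen (restR u v r.1) v u := by
    rintro r hruv hTG
    have : Relation.TransGen r.1 v u :=
      (TransGen.mono (fun a b h => h.1) : TransGen (restR u v r.1) ≤ TransGen r.1) v u hTG
    exact r.2.2 v (this.tail hruv)
  let toF : A → B ⊕ C := fun r =>
    if hC : ¬ r.1 u v ∧ ¬ Relation.TransGen (restR u v r.1) v u then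
      Sum.inr ⟨restR u v r.1, memB r, no_uv r hC.1, hC.2⟩
    else Sum.inl ⟨restR u v r.1, memB r⟩
  let invF : B ⊕ C → A := fun x =>
    match x with
    | Sum.inl σ =>
        if h : Relation.TransGen σ.1 v u then
          ⟨plusR σ.1 v u, plus_orient' huv σ.2.1,
            extend_acyclic σ.2.2 hne.symm (fun hp => σ.2.2.not_both hp h)⟩
        else ⟨plusR σ.1 u v, plus_orient huv σ.2.1, extend_acyclic σ.2.2 hne h⟩
    | Sum.inr σ =>
        ⟨plusR σ.1 v u, plus_orient' huv σ.2.1.1,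
          extend_acyclic σ.2.1.2 hne.symm σ.2.2.1⟩
  have e : A ≃ B ⊕ C := by
    refine ⟨toF, invF, ?_, ?_⟩
    · intro r
      by_cases hC : ¬ r.1 u v ∧ ¬ Relation.TransGen (restR u v r.1) v u
      · show invF (toF r) = r
        rw [show toF r = Sum.inr ⟨restR u v r.1, memB r, no_uv r hC.1, hC.2⟩ from dif_pos hC]
        exact Subtype.ext (plus_restrict_vu huv r.2.1 hC.1)
      · show invF (toF r) = r
        rw [show toF r = Sum.inl ⟨restR u v r.1, memB r⟩ from dif_neg hC]
        show (if h : Relation.TransGen (restR u v r.1) v u then _ else _) = r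
        by_cases hruv : r.1 u v
        · rw [dif_neg (no_vu r hruv)]
          exact Subtype.ext (plus_restrict_uv huv r.2.1 hruv)
        · have hTG : Relation.TransGen (restR u v r.1) v u := by tauto
          rw [dif_pos hTG]
          exact Subtype.ext (plus_restrict_vu huv r.2.1 hruv)
    · rintro (σ | σ)
      · show toF (invF (Sum.inl σ)) = Sum.inl σ
        by_cases hTG : Relation.TransGen σ.1 v u
        · have hinv : invF (Sum.inl σ) = ⟨plusR σ.1 v u, plus_orient' huv σ.2.1,
              extend_acyclic σ.2.2 hne.symm (fun hp => σ.2.2.not_both hp hTG)⟩ := by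
            show (if h : Relation.TransGen σ.1 v u then _ else _) = _
            rw [dif_pos hTG]
          rw [hinv]
          have hrest : restR u v (plusR σ.1 v u) = σ.1 := restrict_plus_vu σ.2.1
          have hcond : ¬ (¬ plusR σ.1 v u u v ∧
              ¬ Relation.TransGen (restR u v (plusR σ.1 v u)) v u) := by
            rw [hrest]; tauto
          show (if hC : _ then _ else _) = Sum.inl σ
          rw [dif_neg hcond]
          exact congrArg Sum.inl (Subtype.ext hrest)
        · have hinv : invF (Sum.inl σ) = ⟨plusR σ.1 u v, plus_orient huv σ.2.1,
              extend_acyclic σ.2.2 hne hTG⟩ := by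
            show (if h : Relation.TransGen σ.1 v u then _ else _) = _
            rw [dif_neg hTG]
          rw [hinv]
          have hrest : restR u v (plusR σ.1 u v) = σ.1 := restrict_plus_uv σ.2.1
          have hcond : ¬ (¬ plusR σ.1 u v u v ∧
              ¬ Relation.TransGen (restR u v (plusR σ.1 u v)) v u) := by
            have : plusR σ.1 u v u v := Or.inr ⟨rfl, rfl⟩
            tauto
          show (if hC : _ then _ else _) = Sum.inl σ
          rw [dif_neg hcond]
          exact congrArg Sum.inl (Subtype.ext hrest)
      · show toF (invF (Sum.inr σ)) = Sum.inr σ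
        have hrest : restR u v (plusR σ.1 v u) = σ.1 := restrict_plus_vu σ.2.1.1
        have hcond : ¬ plusR σ.1 v u u v ∧
            ¬ Relation.TransGen (restR u v (plusR σ.1 v u)) v u := by
          rw [hrest]
          exact ⟨not_plus_vu_uv hne σ.2.1.1, σ.2.2.2⟩
        show (if hC : _ then _ else _) = Sum.inr σ
        rw [dif_pos hcond]
        exact congrArg Sum.inr (Subtype.ext hrest)
  rw [Nat.card_congr e, Nat.card_sum]

end Split

section Contract
universe uu
variable {V : Type uu} {G : SimpleGraph V} {u v : V}

lemma card_orientation_contract [Finite V] (huv : G.Adj u v) :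
    Nat.card {σ : V → V → Prop //
        (IsOrientation (G.deleteEdges {s(u,v)}) σ ∧ IsAcyclicRel σ) ∧
          ¬ Relation.TransGen σ u v ∧ ¬ Relation.TransGen σ v u} =
      Nat.card {τ : {x : V // x ≠ v} → {x : V // x ≠ v} → Prop //
        IsOrientation (contractGraph G u v) τ ∧ IsAcyclicRel τ} := by
  classical
  have hne : u ≠ v := huv.ne
  set Gd := G.deleteEdges {s(u,v)} with hGd
  set Gc := contractGraph G u v with hGc
  let W := {x : V // x ≠ v}
  let ρ : V → W := fun x => if h : x = v then ⟨u, hne⟩ else ⟨x, h⟩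
  have hρ : ∀ a : W, ρ ↑a = a := fun a => by
    show (if h : (a : V) = v then _ else _) = a
    rw [dif_neg a.2]
  have hρv : ρ v = ⟨u, hne⟩ := dif_pos rfl
  have hρu : ρ u = ⟨u, hne⟩ := by
    show (if h : u = v then _ else _) = _
    rw [dif_neg hne]
  let C := {σ : V → V → Prop // (IsOrientation Gd σ ∧ IsAcyclicRel σ) ∧
      ¬ Relation.TransGen σ u v ∧ ¬ Relation.TransGen σ v u}
  let D := {τ : W → W → Prop // IsOrientation Gc τ ∧ IsAcyclicRel τ}
  -- the pushforward relation
  let push : (V → V → Prop) → (W → W → Prop) := fun σ => fun a b =>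
    σ ↑a ↑b ∨ ((a : V) = u ∧ σ v ↑b) ∨ ((b : V) = u ∧ σ ↑a v)
  have push_orient : ∀ σ : C, IsOrientation Gc (push σ.1) := by
    rintro ⟨σ, ⟨hor, hac⟩, hnuv, hnvu⟩
    obtain ⟨hsuv, hsvu⟩ := orient_del_not_uv (u := u) (v := v) hor
    have adjG : ∀ x y, σ x y → G.Adj x y := fun x y h => ((del_adj G u v).mp (hor.1 x y h)).1
    have excl : ∀ a b : W, a ≠ b → push σ a b → push σ b a → False := by
      rintro a b hab (h1 | ⟨ha, h1⟩ | ⟨hb, h1⟩) (h2 | ⟨hb', h2⟩ | ⟨ha', h2⟩)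
      · exact ((hor.2 ↑a ↑b (hor.1 _ _ h1)).mp h1) h2
      · exact hnvu ((Relation.TransGen.single h2).tail (hb' ▸ h1))
      · exact hnuv (ha' ▸ (Relation.TransGen.single h1).tail h2)
      · exact hnvu ((Relation.TransGen.single h1).tail (ha ▸ h2))
      · exact hab (Subtype.ext (ha.trans hb'.symm))
      · exact hac v ((Relation.TransGen.single h1).tail h2)
      · exact hnuv (hb ▸ (Relation.TransGen.single h2).tail h1)
      · exact hac ↑a ((Relation.TransGen.single h1).tail h2)
      · exact hab (Subtype.ext (ha'.trans hb.symm))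
    have total : ∀ a b : W, Gc.Adj a b → push σ a b ∨ push σ b a := by
      rintro a b ⟨hab, hadj | ⟨ha, hadj⟩ | ⟨hb, hadj⟩⟩
      · have hd : Gd.Adj ↑a ↑b := (del_adj G u v).mpr ⟨hadj,
          fun hh => b.2 hh.2, fun hh => a.2 hh.1⟩
        have := hor.2 ↑a ↑b hd
        by_cases h : σ ↑a ↑b
        · exact Or.inl (Or.inl h)
        · exact Or.inr (Or.inl (by tauto))
      · have hbu : (b : V) ≠ u := fun hh => hab (Subtype.ext (ha.trans hh.symm))
        have hd : Gd.Adj v ↑b := (del_adj G u v).mpr ⟨hadj,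
          fun hh => hne hh.1.symm, fun hh => hbu hh.2⟩
        have := hor.2 v ↑b hd
        by_cases h : σ v ↑b
        · exact Or.inl (Or.inr (Or.inl ⟨ha, h⟩))
        · exact Or.inr (Or.inr (Or.inr ⟨ha, by tauto⟩))
      · have hau : (a : V) ≠ u := fun hh => hab (Subtype.ext (hh.trans hb.symm))
        have hd : Gd.Adj ↑a v := (del_adj G u v).mpr ⟨hadj,
          fun hh => hau hh.1, fun hh => hne hh.2.symm⟩
        have := hor.2 ↑a v hd
        by_cases h : σ ↑a v
        · exact Or.inl (Or.inr (Or.inr ⟨hb, h⟩))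
        · exact Or.inr (Or.inr (Or.inl ⟨hb, by tauto⟩))
    constructor
    · rintro a b (h | ⟨ha, h⟩ | ⟨hb, h⟩)
      · have hd := (del_adj G u v).mp (hor.1 _ _ h)
        exact ⟨fun he => (G.ne_of_adj hd.1) (congrArg Subtype.val he), Or.inl hd.1⟩
      · refine ⟨fun he => ?_, Or.inr (Or.inl ⟨ha, adjG _ _ h⟩)⟩
        rw [← he] at h
        exact hsvu (ha ▸ h)
      · refine ⟨fun he => ?_, Or.inr (Or.inr ⟨hb, adjG _ _ h⟩)⟩
        rw [he] at h
        exact hsuv (hb ▸ h)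
    · intro a b hadj
      constructor
      · exact fun h h' => excl a b hadj.1 h h'
      · intro h
        exact (total a b hadj).resolve_right h
  have push_acyclic : ∀ σ : C, IsAcyclicRel (push σ.1) := by
    rintro ⟨σ, ⟨hor, hac⟩, hnuv, hnvu⟩ w hw
    have key := contract_acyclic (u := u) (v := v) hac hne hnuv hnvu
    exact key ↑w (hw.lift Subtype.val (fun a b h => h))
  -- the pullback relation
  let pull : (W → W → Prop) → (V → V → Prop) := fun τ => fun x y =>
    Gd.Adj x y ∧ τ (ρ x) (ρ y)
  have hρadj : ∀ {x y : V}, Gd.Adj x y → Gc.Adj (ρ x) (ρ y) := by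
    intro x y hd
    obtain ⟨hAdj, h1, h2⟩ := (del_adj G u v).mp hd
    by_cases hx : x = v
    · have hyv : y ≠ v := fun hh => G.ne_of_adj hAdj (hx.trans hh.symm)
      have hyu : y ≠ u := fun hh => h2 ⟨hx, hh⟩
      rw [hx, hρv, show ρ y = ⟨y, hyv⟩ from dif_neg hyv]
      exact ⟨fun he => hyu (congrArg Subtype.val he).symm,
        Or.inr (Or.inl ⟨rfl, hx ▸ hAdj⟩)⟩
    · by_cases hy : y = v
      · have hxu : x ≠ u := fun hh => h1 ⟨hh, hy⟩
        rw [hy, hρv, show ρ x = ⟨x, hx⟩ from dif_neg hx]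
        exact ⟨fun he => hxu (congrArg Subtype.val he),
          Or.inr (Or.inr ⟨rfl, hy ▸ hAdj⟩)⟩
      · rw [show ρ x = ⟨x, hx⟩ from dif_neg hx, show ρ y = ⟨y, hy⟩ from dif_neg hy]
        exact ⟨fun he => G.ne_of_adj hAdj (congrArg Subtype.val he), Or.inl hAdj⟩
  have pull_mem : ∀ τ : D, (IsOrientation Gd (pull τ.1) ∧ IsAcyclicRel (pull τ.1)) ∧
      ¬ Relation.TransGen (pull τ.1) u v ∧ ¬ Relation.TransGen (pull τ.1) v u := by
    rintro ⟨τ, hor, hac⟩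
    refine ⟨⟨⟨fun x y h => h.1, ?_⟩, ?_⟩, ?_, ?_⟩
    · intro x y hd
      have h1 := hor.2 (ρ x) (ρ y) (hρadj hd)
      have h2 : Gd.Adj y x := hd.symm
      show (Gd.Adj x y ∧ τ (ρ x) (ρ y)) ↔ ¬ (Gd.Adj y x ∧ τ (ρ y) (ρ x))
      tauto
    · intro w hw
      exact hac (ρ w) (hw.lift ρ (fun a b h => h.2))
    · intro hp
      have : TransGen τ (ρ u) (ρ v) := hp.lift ρ (fun a b h => h.2)
      rw [hρu, hρv] at this
      exact hac _ this
    · intro hp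
      have : TransGen τ (ρ v) (ρ u) := hp.lift ρ (fun a b h => h.2)
      rw [hρu, hρv] at this
      exact hac _ this
  have e : C ≃ D := by
    refine ⟨fun σ => ⟨push σ.1, push_orient σ, push_acyclic σ⟩,
      fun τ => ⟨pull τ.1, pull_mem τ⟩, ?_, ?_⟩
    · rintro ⟨σ, ⟨hor, hac⟩, hnuv, hnvu⟩
      apply Subtype.ext
      show pull (push σ) = σ
      obtain ⟨hsuv, hsvu⟩ := orient_del_not_uv (u := u) (v := v) hor
      funext x y
      apply propext
      constructor
      · rintro ⟨hd, hτ⟩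
        obtain ⟨hAdj, h1, h2⟩ := (del_adj G u v).mp hd
        have hor2 : σ x y ∨ σ y x := by
          have := hor.2 x y hd
          tauto
        by_cases hx : x = v
        · have hyv : y ≠ v := fun hh => G.ne_of_adj hAdj (hx.trans hh.symm)
          have hyu : y ≠ u := fun hh => h2 ⟨hx, hh⟩
          rw [hx, hρv, show ρ y = ⟨y, hyv⟩ from dif_neg hyv] at hτ
          rcases hτ with h | ⟨-, h⟩ | ⟨hyu', -⟩
          · -- σ u y and σ y x with x = v would give a u→v path
            rcases hor2 with h' | h'
            · exact h'
            · exact absurd ((Relation.TransGen.single h).tail (hx ▸ h')) hnuv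
          · rw [hx]; exact h
          · exact absurd hyu' hyu
        · by_cases hy : y = v
          · have hxu : x ≠ u := fun hh => h1 ⟨hh, hy⟩
            rw [hy, hρv, show ρ x = ⟨x, hx⟩ from dif_neg hx] at hτ
            rcases hτ with h | ⟨hxu', -⟩ | ⟨-, h⟩
            · rcases hor2 with h' | h'
              · exact h'
              · exact absurd ((Relation.TransGen.single (hy ▸ h' : σ v x)).tail h) hnvu
            · exact absurd hxu' hxu
            · rw [hy]; exact h
          · rw [show ρ x = ⟨x, hx⟩ from dif_neg hx,
              show ρ y = ⟨y, hy⟩ from dif_neg hy] at hτ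
            rcases hτ with h | ⟨hxu, h⟩ | ⟨hyu, h⟩
            · exact h
            · -- x = u, σ v y : show σ x y
              rcases hor2 with h' | h'
              · exact h'
              · exact absurd ((Relation.TransGen.single h).tail (hxu ▸ h' : σ y u)) hnvu
            · -- y = u, σ x v : show σ x y
              rcases hor2 with h' | h'
              · exact h'
              · exact absurd ((Relation.TransGen.single (hyu ▸ h' : σ u x)).tail h) hnuv
      · intro h
        have hd : Gd.Adj x y := hor.1 x y h
        obtain ⟨hAdj, h1, h2⟩ := (del_adj G u v).mp hd
        refine ⟨hd, ?_⟩
        by_cases hx : x = v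
        · have hyv : y ≠ v := fun hh => G.ne_of_adj hAdj (hx.trans hh.symm)
          rw [hx, hρv, show ρ y = ⟨y, hyv⟩ from dif_neg hyv]
          exact Or.inr (Or.inl ⟨rfl, hx ▸ h⟩)
        · by_cases hy : y = v
          · rw [hy, hρv, show ρ x = ⟨x, hx⟩ from dif_neg hx]
            exact Or.inr (Or.inr ⟨rfl, hy ▸ h⟩)
          · rw [show ρ x = ⟨x, hx⟩ from dif_neg hx, show ρ y = ⟨y, hy⟩ from dif_neg hy]
            exact Or.inl h
    · rintro ⟨τ, hor, hac⟩
      apply Subtype.ext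
      show push (pull τ) = τ
      funext a b
      apply propext
      constructor
      · rintro (⟨hd, hτ⟩ | ⟨ha, hd, hτ⟩ | ⟨hb, hd, hτ⟩)
        · rwa [hρ a, hρ b] at hτ
        · rw [hρv, hρ b] at hτ
          rwa [show a = (⟨u, hne⟩ : W) from Subtype.ext ha]
        · rw [hρv, hρ a] at hτ
          rwa [show b = (⟨u, hne⟩ : W) from Subtype.ext hb]
      · intro hτ
        obtain ⟨hab, hadj | ⟨ha, hadj⟩ | ⟨hb, hadj⟩⟩ := hor.1 a b hτ
        · have hd : Gd.Adj ↑a ↑b := (del_adj G u v).mpr ⟨hadj,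
            fun hh => b.2 hh.2, fun hh => a.2 hh.1⟩
          exact Or.inl ⟨hd, by rwa [hρ a, hρ b]⟩
        · have hbu : (b : V) ≠ u := fun hh => hab (Subtype.ext (ha.trans hh.symm))
          have hd : Gd.Adj v ↑b := (del_adj G u v).mpr ⟨hadj,
            fun hh => hne hh.1.symm, fun hh => hbu hh.2⟩
          refine Or.inr (Or.inl ⟨ha, hd, ?_⟩)
          rw [hρv, hρ b]
          rwa [show (⟨u, hne⟩ : W) = a from Subtype.ext ha.symm]
        · have hau : (a : V) ≠ u := fun hh => hab (Subtype.ext (hh.trans hb.symm))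
          have hd : Gd.Adj ↑a v := (del_adj G u v).mpr ⟨hadj,
            fun hh => hau hh.1, fun hh => hne hh.2.symm⟩
          refine Or.inr (Or.inr ⟨hb, hd, ?_⟩)
          rw [hρv, hρ a]
          rwa [show (⟨u, hne⟩ : W) = b from Subtype.ext hb.symm]
  exact Nat.card_congr e

lemma card_acyclic_split [Finite V] (huv : G.Adj u v) :
    acyclicOrientationCount G =
      acyclicOrientationCount (G.deleteEdges {s(u,v)}) +
        acyclicOrientationCount (contractGraph G u v) := by
  rw [acyclicOrientationCount, card_orientation_split huv, card_orientation_contract huv]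
  rfl

end Contract


section Coloring
universe uu
variable {V : Type uu} {G : SimpleGraph V} {u v : V}

lemma descend_proper (huv : G.Adj u v) {k : ℕ} {f : V → Fin k}
    (hf : ∀ a b, (G.deleteEdges {s(u,v)}).Adj a b → f a ≠ f b) (h : f u = f v) :
    ∀ a b, (contractGraph G u v).Adj a b → f ↑a ≠ f ↑b := by
  have hne : u ≠ v := huv.ne
  rintro a b ⟨hab, hadj | ⟨ha, hadj⟩ | ⟨hb, hadj⟩⟩
  · refine hf ↑a ↑b ((del_adj G u v).mpr ⟨hadj, ?_, ?_⟩)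
    · rintro ⟨-, h2⟩; exact b.2 h2
    · rintro ⟨h1, -⟩; exact a.2 h1
  · have hbu : (b : V) ≠ u := fun hh => hab (Subtype.ext (ha.trans hh.symm))
    have h3 : (G.deleteEdges {s(u,v)}).Adj v ↑b :=
      (del_adj G u v).mpr ⟨hadj, fun hh => hne hh.1.symm, fun hh => hbu hh.2⟩
    have h4 := hf v ↑b h3
    rw [ha, h]; exact h4
  · have hau : (a : V) ≠ u := fun hh => hab (Subtype.ext (hh.trans hb.symm))
    have h3 : (G.deleteEdges {s(u,v)}).Adj ↑a v :=
      (del_adj G u v).mpr ⟨hadj, fun hh => hau hh.1, fun hh => hne hh.2.symm⟩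
    have h4 := hf ↑a v h3
    rw [hb]
    exact fun hh => h4 (hh.trans h)

lemma lift_proper [DecidableEq V] (huv : G.Adj u v) {k : ℕ} {g : {x : V // x ≠ v} → Fin k}
    (hg : ∀ a b, (contractGraph G u v).Adj a b → g a ≠ g b) :
    ∀ a b, (G.deleteEdges {s(u,v)}).Adj a b →
      (fun x => if h : x = v then g ⟨u, huv.ne⟩ else g ⟨x, h⟩) a ≠
      (fun x => if h : x = v then g ⟨u, huv.ne⟩ else g ⟨x, h⟩) b := by
  have hne : u ≠ v := huv.ne
  intro a b hab
  obtain ⟨hAdj, h1, h2⟩ := (del_adj G u v).mp hab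
  dsimp only
  by_cases hav : a = v
  · have hbv : b ≠ v := fun hh => G.ne_of_adj hAdj (hav.trans hh.symm)
    have hbu : b ≠ u := fun hh => h2 ⟨hav, hh⟩
    rw [dif_pos hav, dif_neg hbv]
    refine hg ⟨u, hne⟩ ⟨b, hbv⟩ ⟨?_, Or.inr (Or.inl ⟨rfl, hav ▸ hAdj⟩)⟩
    exact fun hh => hbu (congrArg Subtype.val hh).symm
  · by_cases hbv : b = v
    · have hau : a ≠ u := fun hh => h1 ⟨hh, hbv⟩
      rw [dif_neg hav, dif_pos hbv]
      refine hg ⟨a, hav⟩ ⟨u, hne⟩ ⟨?_, Or.inr (Or.inr ⟨rfl, hbv ▸ hAdj⟩)⟩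
      exact fun hh => hau (congrArg Subtype.val hh)
    · rw [dif_neg hav, dif_neg hbv]
      refine hg ⟨a, hav⟩ ⟨b, hbv⟩ ⟨?_, Or.inl hAdj⟩
      exact fun hh => G.ne_of_adj hAdj (congrArg Subtype.val hh)

lemma card_proper_split [Finite V] (huv : G.Adj u v) (k : ℕ) :
    properColoringCount (G.deleteEdges {s(u,v)}) k =
      properColoringCount G k + properColoringCount (contractGraph G u v) k := by
  classical
  have hne : u ≠ v := huv.ne
  have adj_iff : ∀ f : V → Fin k,
      (∀ a b, G.Adj a b → f a ≠ f b) ↔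
        (∀ a b, (G.deleteEdges {s(u,v)}).Adj a b → f a ≠ f b) ∧ f u ≠ f v := by
    intro f
    constructor
    · intro h
      exact ⟨fun a b hab => h a b ((del_adj G u v).mp hab).1, h u v huv⟩
    · rintro ⟨h, hfuv⟩ a b hab
      by_cases h1 : a = u ∧ b = v
      · obtain ⟨rfl, rfl⟩ := h1; exact hfuv
      by_cases h2 : a = v ∧ b = u
      · obtain ⟨rfl, rfl⟩ := h2; exact fun hh => hfuv hh.symm
      · exact h a b ((del_adj G u v).mpr ⟨hab, h1, h2⟩)
  let A := {f : V → Fin k // ∀ a b, (G.deleteEdges {s(u,v)}).Adj a b → f a ≠ f b}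
  let B := {f : V → Fin k // ∀ a b, G.Adj a b → f a ≠ f b}
  let C := {g : {x : V // x ≠ v} → Fin k // ∀ a b, (contractGraph G u v).Adj a b → g a ≠ g b}
  let toF : A → B ⊕ C := fun f =>
    if h : f.1 u ≠ f.1 v then Sum.inl ⟨f.1, (adj_iff f.1).mpr ⟨f.2, h⟩⟩
    else Sum.inr ⟨fun a => f.1 ↑a, descend_proper huv f.2 (not_not.mp h)⟩
  let invF : B ⊕ C → A := fun x =>
    match x with
    | Sum.inl f => ⟨f.1, fun a b hab => f.2 a b ((del_adj G u v).mp hab).1⟩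
    | Sum.inr g => ⟨fun x => if h : x = v then g.1 ⟨u, huv.ne⟩ else g.1 ⟨x, h⟩,
        lift_proper huv g.2⟩
  have e : A ≃ B ⊕ C := by
    refine ⟨toF, invF, ?_, ?_⟩
    · intro f
      by_cases h : f.1 u ≠ f.1 v
      · show invF (toF f) = f
        rw [show toF f = Sum.inl ⟨f.1, (adj_iff f.1).mpr ⟨f.2, h⟩⟩ from dif_pos h]
      · show invF (toF f) = f
        rw [show toF f = Sum.inr ⟨fun a => f.1 ↑a,
              descend_proper huv f.2 (not_not.mp h)⟩ from dif_neg h]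
        have h' : f.1 u = f.1 v := not_not.mp h
        apply Subtype.ext
        funext x
        show (if hx : x = v then f.1 u else f.1 x) = f.1 x
        by_cases hx : x = v
        · rw [dif_pos hx, hx, h']
        · rw [dif_neg hx]
    · rintro (f | g)
      · show toF (invF (Sum.inl f)) = Sum.inl f
        have h : (invF (Sum.inl f)).1 u ≠ (invF (Sum.inl f)).1 v := f.2 u v huv
        rw [show toF (invF (Sum.inl f)) = Sum.inl ⟨f.1, _⟩ from dif_pos h]
      · show toF (invF (Sum.inr g)) = Sum.inr g
        have hval : ∀ x : V, (invF (Sum.inr g)).1 x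
            = if h : x = v then g.1 ⟨u, huv.ne⟩ else g.1 ⟨x, h⟩ := fun x => rfl
        have h : ¬ ((invF (Sum.inr g)).1 u ≠ (invF (Sum.inr g)).1 v) := by
          rw [not_not, hval, hval, dif_neg hne, dif_pos rfl]
        rw [show toF (invF (Sum.inr g)) = Sum.inr ⟨fun a => (invF (Sum.inr g)).1 ↑a,
            descend_proper huv (invF (Sum.inr g)).2 (not_not.mp h)⟩ from dif_neg h]
        congr 1
        apply Subtype.ext
        funext a
        show (if h : (a : V) = v then g.1 ⟨u, huv.ne⟩ else g.1 ⟨↑a, h⟩) = g.1 a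
        rw [dif_neg a.2]
  show Nat.card A = Nat.card B + Nat.card C
  rw [Nat.card_congr e, Nat.card_sum]


end Coloring

section MainAux
universe uu
variable {V : Type uu}

lemma no_edges_case [Finite V] {G : SimpleGraph V} (h : ∀ a b : V, ¬ G.Adj a b) :
    IsChromaticPoly G (X ^ Nat.card V) ∧
      ((-1:ℤ)) ^ Nat.card V * (X ^ Nat.card V : Polynomial ℤ).eval (-1) =
        acyclicOrientationCount G := by
  classical
  constructor
  · intro k
    have e1 : {f : V → Fin k // ∀ a b, G.Adj a b → f a ≠ f b} ≃ (V → Fin k) :=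
      Equiv.subtypeUnivEquiv (fun f a b hab => absurd hab (h a b))
    rw [properColoringCount, Nat.card_congr e1, Nat.card_fun,
      Nat.card_eq_fintype_card (α := Fin k), Fintype.card_fin, eval_pow, eval_X]
    push_cast
    ring
  · have hbot : IsOrientation G (fun (_ _ : V) => False) ∧
        IsAcyclicRel (fun (_ _ : V) => False) := by
      refine ⟨⟨fun a b hf => hf.elim, fun a b hadj => absurd hadj (h a b)⟩, fun w hw => ?_⟩
      cases hw with
      | single h => exact h
      | tail _ h => exact h
    have hu : ∀ r : {r : V → V → Prop // IsOrientation G r ∧ IsAcyclicRel r},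
        r = ⟨fun _ _ => False, hbot⟩ := by
      rintro ⟨r, hor, hac⟩
      apply Subtype.ext
      funext a b
      apply propext
      exact ⟨fun hr => h a b (hor.1 a b hr), False.elim⟩
    have h1 : acyclicOrientationCount G = 1 := by
      rw [acyclicOrientationCount]
      haveI : Subsingleton {r : V → V → Prop // IsOrientation G r ∧ IsAcyclicRel r} :=
        ⟨fun a b => (hu a).trans (hu b).symm⟩
      haveI : Nonempty {r : V → V → Prop // IsOrientation G r ∧ IsAcyclicRel r} :=
        ⟨⟨fun _ _ => False, hbot⟩⟩
      exact Nat.card_unique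
    rw [h1, eval_pow, eval_X, ← mul_pow]
    norm_num

lemma chromaticPoly_unique {G : SimpleGraph V} {P Q : Polynomial ℤ}
    (hP : IsChromaticPoly G P) (hQ : IsChromaticPoly G Q) : P = Q := by
  by_contra hne
  have h0 : P - Q ≠ 0 := sub_ne_zero.mpr hne
  have hinf : {x : ℤ | (P - Q).IsRoot x}.Infinite := by
    have hsub : Set.range ((↑) : ℕ → ℤ) ⊆ {x : ℤ | (P - Q).IsRoot x} := by
      rintro x ⟨n, rfl⟩
      show (P - Q).eval (n : ℤ) = 0
      rw [eval_sub, hP n, hQ n, sub_self]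
    exact (Set.infinite_range_of_injective (fun a b hab => by exact_mod_cast hab)).mono hsub
  exact h0 (Polynomial.eq_zero_of_infinite_isRoot _ hinf)

lemma main_aux : ∀ (N : ℕ) (V : Type uu) [Finite V] (G : SimpleGraph V),
    (Nat.card V)^3 + Nat.card G.edgeSet ≤ N →
    ∃ P : Polynomial ℤ, IsChromaticPoly G P ∧
      ((-1:ℤ)) ^ Nat.card V * P.eval (-1) = acyclicOrientationCount G := by
  intro N
  induction N with
  | zero =>
    intro V _ G hle
    have h3 : (Nat.card V)^3 = 0 := by omega
    have hcV : Nat.card V = 0 := by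
      exact pow_eq_zero_iff (by norm_num : (3:ℕ) ≠ 0) |>.mp h3
    haveI : IsEmpty V := by
      rcases Nat.card_eq_zero.mp hcV with h | h
      · exact h
      · exact absurd h (not_infinite_iff_finite.mpr ‹Finite V›)
    exact ⟨_, no_edges_case (fun a b _ => (IsEmpty.false a).elim)⟩
  | succ N ih =>
    intro V _ G hle
    by_cases hE : ∃ a b, G.Adj a b
    · obtain ⟨u, v, huv⟩ := hE
      classical
      have hne : u ≠ v := huv.ne
      have hEd : Nat.card (G.deleteEdges {s(u,v)}).edgeSet < Nat.card G.edgeSet := by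
        rw [SimpleGraph.edgeSet_deleteEdges, Nat.card_coe_set_eq, Nat.card_coe_set_eq]
        exact Set.ncard_diff_singleton_lt_of_mem ((G.mem_edgeSet).mpr huv)
          (Set.toFinite _)
      have hW : Nat.card V = Nat.card {x : V // x ≠ v} + 1 := by
        haveI : Unique {x : V // x = v} := ⟨⟨⟨v, rfl⟩⟩, fun x => Subtype.ext x.2⟩
        have h1 := Nat.card_congr (Equiv.sumCompl (· = v))
        rw [Nat.card_sum, Nat.card_unique] at h1
        have h2 : Nat.card {x : V // ¬ x = v} = Nat.card {x : V // x ≠ v} := rfl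
        omega
      have hEc : Nat.card (contractGraph G u v).edgeSet ≤
          (Nat.card {x : V // x ≠ v})^2 := by
        have h1 : Nat.card (contractGraph G u v).edgeSet ≤
            Nat.card (Sym2 {x : V // x ≠ v}) := by
          rw [Nat.card_coe_set_eq, ← Set.ncard_univ]
          exact Set.ncard_le_ncard (Set.subset_univ _) (Set.toFinite _)
        have h2 : Nat.card (Sym2 {x : V // x ≠ v}) ≤
            Nat.card ({x : V // x ≠ v} × {x : V // x ≠ v}) := by
          refine Nat.card_le_card_of_surjective (Function.uncurry Sym2.mk) (fun z => ?_)
          induction z using Sym2.ind with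
          | _ x y => exact ⟨(x, y), rfl⟩
        have h3 := h1.trans h2
        rwa [Nat.card_prod, ← pow_two] at h3
      obtain ⟨Pd, hPd, hAd⟩ := ih V (G.deleteEdges {s(u,v)}) (by omega)
      have hmeas : (Nat.card {x : V // x ≠ v})^3 + Nat.card (contractGraph G u v).edgeSet ≤ N := by
        have hle' : (Nat.card {x : V // x ≠ v} + 1)^3 + Nat.card G.edgeSet ≤ N + 1 := by
          rw [← hW]; exact hle
        have hcube : (Nat.card {x : V // x ≠ v} + 1)^3 =
            (Nat.card {x : V // x ≠ v})^3 + 3*(Nat.card {x : V // x ≠ v})^2 +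
              3*(Nat.card {x : V // x ≠ v}) + 1 := by ring
        rw [hcube] at hle'
        linarith [hEc, hle']
      obtain ⟨Pc, hPc, hAc⟩ := ih {x : V // x ≠ v} (contractGraph G u v) hmeas
      refine ⟨Pd - Pc, ?_, ?_⟩
      · intro k
        rw [eval_sub, hPd k, hPc k, card_proper_split huv k]
        push_cast
        ring
      · rw [eval_sub, card_acyclic_split huv]
        have hsplit : ((-1:ℤ)) ^ Nat.card V * (Pd.eval (-1) - Pc.eval (-1)) =
            (-1)^(Nat.card V) * Pd.eval (-1) +
              (-1)^(Nat.card {x : V // x ≠ v}) * Pc.eval (-1) := by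
          rw [hW, pow_succ]
          ring
        rw [hsplit, hAd, hAc]
        push_cast
        ring
    · push_neg at hE
      exact ⟨_, no_edges_case hE⟩

end MainAux

/-- Stanley's theorem: `(-1)^|V| χ_G(-1)` is the number of acyclic orientations of `G`. -/
theorem neg_one_eval_eq_acyclicOrientationCount {V : Type*} [Fintype V]
    (G : SimpleGraph V) (P : Polynomial ℤ) (hP : IsChromaticPoly G P) :
    (-1 : ℤ) ^ (Fintype.card V) * P.eval (-1) = acyclicOrientationCount G := by
  classical
  obtain ⟨Q, hQ, hA⟩ := main_aux ((Nat.card V)^3 + Nat.card G.edgeSet) V G le_rfl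
  rw [chromaticPoly_unique hP hQ, ← Nat.card_eq_fintype_card]
  exact hA
end

section
/- For a finite simple graph G = (V,E) and a positive integer k, the value (−1)^{|V|} χ_G(−k) equals the number of pairs (σ, O) where σ : V → {1, …, k} is a function and O is an acyclic orientation of G such that whenever u → w in O, we have σ(u) ≥ σ(w). -/
open SimpleGraph Polynomial

section
variable {V : Type*}
open scoped Classical in
noncomputable def proj (u v : V) (hne : u ≠ v) (x : V) : {x : V // x ≠ v} :=
  if h : x = v then ⟨u, hne⟩ else ⟨x, h⟩
variable {u v : V} (hne : u ≠ v)
@[simp] lemma proj_coe (a : {x : V // x ≠ v}) : proj u v hne ↑a = a := by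
  simp [proj, a.2]
@[simp] lemma proj_v : proj u v hne v = ⟨u, hne⟩ := by simp [proj]
@[simp] lemma proj_u : proj u v hne u = ⟨u, hne⟩ := by simp [proj, hne]
lemma proj_eq_cases {x y : V} (h : proj u v hne x = proj u v hne y) :
    x = y ∨ (x = u ∧ y = v) ∨ (x = v ∧ y = u) := by
  by_cases hx : x = v <;> by_cases hy : y = v <;>
    simp only [proj, dif_pos, dif_neg, hx, hy, Subtype.ext_iff, dite_true, dite_false] at h
  · subst hx; subst hy; left; rfl
  · subst hx; right; right; exact ⟨rfl, h.symm⟩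
  · subst hy; right; left; exact ⟨h, rfl⟩
  · left; exact h
lemma comp_proj {α : Type*} {σ : V → α} (hσ : σ u = σ v) (x : V) :
    σ ↑(proj u v hne x) = σ x := by
  by_cases h : x = v
  · subst h; simpa [proj] using hσ
  · simp [proj, h]
def Gd (G : SimpleGraph V) (u v : V) : SimpleGraph V := G.deleteEdges {s(u,v)}
lemma Gd_adj {G : SimpleGraph V} {a b : V} :
    (Gd G u v).Adj a b ↔ G.Adj a b ∧ ¬((a = u ∧ b = v) ∨ (a = v ∧ b = u)) := by
  simp [Gd, SimpleGraph.deleteEdges_adj, Sym2.eq_iff]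
lemma not_Gd_uv {G : SimpleGraph V} : ¬ (Gd G u v).Adj u v := by simp [Gd_adj]
lemma not_Gd_vu {G : SimpleGraph V} : ¬ (Gd G u v).Adj v u := by simp [Gd_adj]
def Gc (G : SimpleGraph V) (u v : V) (hne : u ≠ v) : SimpleGraph {x : V // x ≠ v} where
  Adj a b := a ≠ b ∧
    ∃ a' b', (Gd G u v).Adj a' b' ∧ proj u v hne a' = a ∧ proj u v hne b' = b
  symm := ⟨by
    rintro a b ⟨hab, a', b', h, ha, hb⟩
    exact ⟨hab.symm, b', a', h.symm, hb, ha⟩⟩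
  loopless := ⟨fun a h => h.1 rfl⟩

-- relation lemmas
variable {r : V → V → Prop} {x y : V}
lemma transGen_union_single
    (h : Relation.TransGen (fun a b => r a b ∨ (a = u ∧ b = v)) x y) :
    Relation.TransGen r x y ∨
      (Relation.ReflTransGen r x u ∧ Relation.ReflTransGen r v y) := by
  induction h with
  | single h =>
    rcases h with h | ⟨rfl, rfl⟩
    · exact Or.inl (Relation.TransGen.single h)
    · exact Or.inr ⟨Relation.ReflTransGen.refl, Relation.ReflTransGen.refl⟩
  | tail _ h ih =>
    rcases h with h | ⟨rfl, rfl⟩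
    · rcases ih with ih | ⟨h1, h2⟩
      · exact Or.inl (ih.tail h)
      · exact Or.inr ⟨h1, h2.tail h⟩
    · rcases ih with ih | ⟨h1, h2⟩
      · exact Or.inr ⟨ih.to_reflTransGen, Relation.ReflTransGen.refl⟩
      · exact Or.inr ⟨h1, Relation.ReflTransGen.refl⟩
lemma reflTransGen_union_single
    (h : Relation.ReflTransGen (fun a b => r a b ∨ (a = u ∧ b = v)) x y) :
    Relation.ReflTransGen r x y ∨
      (Relation.ReflTransGen r x u ∧ Relation.ReflTransGen r v y) := by
  induction h with
  | refl => exact Or.inl Relation.ReflTransGen.refl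
  | tail _ h ih =>
    rcases h with h | ⟨rfl, rfl⟩
    · rcases ih with ih | ⟨h1, h2⟩
      · exact Or.inl (ih.tail h)
      · exact Or.inr ⟨h1, h2.tail h⟩
    · rcases ih with ih | ⟨h1, h2⟩
      · exact Or.inr ⟨ih, Relation.ReflTransGen.refl⟩
      · exact Or.inr ⟨h1, Relation.ReflTransGen.refl⟩
lemma le_of_reflTransGen {α : Type*} [Preorder α] {f : V → α}
    (hc : ∀ a b, r a b → f b ≤ f a) (h : Relation.ReflTransGen r x y) : f y ≤ f x := by
  induction h with
  | refl => exact le_rfl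
  | tail _ h ih => exact le_trans (hc _ _ h) ih
lemma acyclic_mono {s : V → V → Prop} (hle : ∀ a b, r a b → s a b)
    (hs : IsAcyclicRel s) : IsAcyclicRel r :=
  fun w hw => hs w (Relation.TransGen.mono hle _ _ hw)
lemma acyclic_add (hr : IsAcyclicRel r) (hnp : ¬ Relation.ReflTransGen r v u) :
    IsAcyclicRel (fun a b => r a b ∨ (a = u ∧ b = v)) := by
  intro w hw
  rcases transGen_union_single hw with h | ⟨h1, h2⟩
  · exact hr w h
  · exact hnp (h2.trans h1)
lemma path_of_not_acyclic_add (hr : IsAcyclicRel r)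
    (h : ¬ IsAcyclicRel (fun a b => r a b ∨ (a = u ∧ b = v))) :
    Relation.ReflTransGen r v u :=
  by_contra fun hnp => h (acyclic_add hr hnp)

end

section ColorEquivs
variable {V : Type*} {u v : V} (hne : u ≠ v) {G : SimpleGraph V} (huv : G.Adj u v) {k : ℕ}

/-- proper colorings of Gd with σu≠σv ≃ proper colorings of G -/
noncomputable def colorEquiv1 :
    {f : V → Fin k // (∀ a b, (Gd G u v).Adj a b → f a ≠ f b) ∧ f u ≠ f v} ≃
      {f : V → Fin k // ∀ a b, G.Adj a b → f a ≠ f b} where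
  toFun f := ⟨f.1, by
    intro a b hab
    rcases f.2 with ⟨h1, h2⟩
    by_cases hc : (a = u ∧ b = v) ∨ (a = v ∧ b = u)
    · rcases hc with ⟨rfl, rfl⟩ | ⟨rfl, rfl⟩
      · exact h2
      · exact h2.symm
    · exact h1 a b (Gd_adj.mpr ⟨hab, hc⟩)⟩
  invFun f := ⟨f.1, fun a b hab => f.2 a b (Gd_adj.mp hab).1, f.2 u v huv⟩
  left_inv f := rfl
  right_inv f := rfl

/-- proper colorings of Gd with σu=σv ≃ proper colorings of Gc -/
noncomputable def colorEquiv2 :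
    {f : V → Fin k // (∀ a b, (Gd G u v).Adj a b → f a ≠ f b) ∧ f u = f v} ≃
      {g : {x : V // x ≠ v} → Fin k // ∀ a b, (Gc G u v hne).Adj a b → g a ≠ g b} where
  toFun f := ⟨fun a => f.1 ↑a, by
    rintro a b ⟨hab, a', b', h, rfl, rfl⟩
    have := f.2.1 a' b' h
    dsimp only
    rw [comp_proj hne f.2.2, comp_proj hne f.2.2]
    exact this⟩
  invFun g := ⟨fun x => g.1 (proj u v hne x), by
    constructor
    · intro a b hab heq
      have hadj : (Gc G u v hne).Adj (proj u v hne a) (proj u v hne b) := by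
        refine ⟨?_, a, b, hab, rfl, rfl⟩
        intro he
        have := Gd_adj.mp hab
        rcases (by
          by_cases hx : a = v <;> by_cases hy : b = v <;>
            simp only [proj, dif_pos, dif_neg, hx, hy, Subtype.ext_iff, dite_true,
              dite_false] at he
          · exact absurd (hx.trans hy.symm) this.1.ne
          · exact Or.inr (Or.inr ⟨hx, he.symm⟩)
          · exact Or.inr (Or.inl ⟨he, hy⟩)
          · exact Or.inl he : a = b ∨ (a = u ∧ b = v) ∨ (a = v ∧ b = u)) with
          h | h | h
        · exact this.1.ne h
        · exact this.2 (Or.inl h)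
        · exact this.2 (Or.inr h)
      exact g.2 _ _ hadj heq
    · simp [proj, hne]⟩
  left_inv f := by
    apply Subtype.ext
    funext x
    exact comp_proj hne f.2.2 x
  right_inv g := by
    apply Subtype.ext
    funext a
    simp

end ColorEquivs

-- === pairs machinery ===
section PairsSec
variable {V : Type*} {u v : V} {k : ℕ}

def addE (O' : V → V → Prop) (x y : V) : V → V → Prop := fun a b => O' a b ∨ (a = x ∧ b = y)

variable {G : SimpleGraph V}
variable {σ : V → Fin k} {O O' : V → V → Prop}

lemma np_of_acyclic_add (hAuv : IsAcyclicRel (addE O' u v)) :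
    ¬ Relation.ReflTransGen O' v u := by
  intro hp
  exact hAuv u (Relation.TransGen.head' (Or.inr ⟨rfl, rfl⟩)
    (Relation.ReflTransGen.mono (fun a b h => Or.inl h) _ _ hp))

lemma lift_choice (hne : u ≠ v) (hA : IsAcyclicRel O') (hC : ∀ a b, O' a b → σ b ≤ σ a)
    (h : ¬ (σ u ≤ σ v ∧ IsAcyclicRel (addE O' v u))) :
    σ v ≤ σ u ∧ IsAcyclicRel (addE O' u v) := by
  have hvu : σ v ≤ σ u := by
    by_contra hlt
    have h1 : σ u ≤ σ v := le_of_not_ge hlt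
    have h3 : Relation.ReflTransGen O' u v :=
      path_of_not_acyclic_add hA (fun ha => h ⟨h1, ha⟩)
    exact hlt (le_of_reflTransGen hC h3)
  refine ⟨hvu, ?_⟩
  by_contra h4
  have h5 : Relation.ReflTransGen O' v u := path_of_not_acyclic_add hA h4
  have h6 : σ u ≤ σ v := le_of_reflTransGen hC h5
  have h8 : Relation.ReflTransGen O' u v :=
    path_of_not_acyclic_add hA (fun ha => h ⟨h6, ha⟩)
  have : Relation.TransGen O' u u := by
    rcases Relation.reflTransGen_iff_eq_or_transGen.mp h8 with he | ht
    · exact absurd he.symm hne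
    · exact ht.trans_left h5
  exact hA u this

lemma lift_cond (huv : G.Adj u v) {x y : V} (hxy : (x = u ∧ y = v) ∨ (x = v ∧ y = u))
    (hO : IsOrientation (Gd G u v) O') (hC : ∀ a b, O' a b → σ b ≤ σ a)
    (hle : σ y ≤ σ x) (hAc : IsAcyclicRel (addE O' x y)) :
    IsOrientation G (addE O' x y) ∧ IsAcyclicRel (addE O' x y) ∧
      ∀ a b, addE O' x y a b → σ b ≤ σ a := by
  have hGxy : G.Adj x y := by
    rcases hxy with ⟨rfl, rfl⟩ | ⟨rfl, rfl⟩
    · exact huv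
    · exact huv.symm
  refine ⟨⟨?_, ?_⟩, hAc, ?_⟩
  · rintro a b (h | ⟨rfl, rfl⟩)
    · exact ((Gd_adj).mp (hO.1 a b h)).1
    · exact hGxy
  · intro a b hab
    by_cases hc : (a = u ∧ b = v) ∨ (a = v ∧ b = u)
    · have nab : ¬ O' a b := by
        intro h
        rcases hc with ⟨rfl, rfl⟩ | ⟨rfl, rfl⟩
        · exact not_Gd_uv (hO.1 _ _ h)
        · exact not_Gd_vu (hO.1 _ _ h)
      have nba : ¬ O' b a := by
        intro h
        rcases hc with ⟨rfl, rfl⟩ | ⟨rfl, rfl⟩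
        · exact not_Gd_vu (hO.1 _ _ h)
        · exact not_Gd_uv (hO.1 _ _ h)
      have hxyne' : y ≠ x := hGxy.ne'
      have key : (a = x ∧ b = y) ∨ (b = x ∧ a = y) := by
        rcases hc with ⟨rfl, rfl⟩ | ⟨rfl, rfl⟩ <;>
          rcases hxy with ⟨h1, h2⟩ | ⟨h1, h2⟩ <;> tauto
      show (O' a b ∨ _) ↔ ¬ (O' b a ∨ _)
      constructor
      · rintro (h | ⟨rfl, rfl⟩)
        · exact absurd h nab
        · rintro (h | ⟨h1, h2⟩)
          · exact nba h
          · exact hxyne' h1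
      · intro hn
        rcases key with ⟨rfl, rfl⟩ | ⟨rfl, rfl⟩
        · exact Or.inr ⟨rfl, rfl⟩
        · exact absurd (Or.inr ⟨rfl, rfl⟩) hn
    · have hGd : (Gd G u v).Adj a b := Gd_adj.mpr ⟨hab, hc⟩
      have horient := hO.2 a b hGd
      have h1 : ¬ (a = x ∧ b = y) := by
        rintro ⟨rfl, rfl⟩
        rcases hxy with ⟨rfl, rfl⟩ | ⟨rfl, rfl⟩
        · exact hc (Or.inl ⟨rfl, rfl⟩)
        · exact hc (Or.inr ⟨rfl, rfl⟩)
      have h2 : ¬ (b = x ∧ a = y) := by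
        rintro ⟨rfl, rfl⟩
        rcases hxy with ⟨rfl, rfl⟩ | ⟨rfl, rfl⟩
        · exact hc (Or.inr ⟨rfl, rfl⟩)
        · exact hc (Or.inl ⟨rfl, rfl⟩)
      show (O' a b ∨ _) ↔ ¬ (O' b a ∨ _)
      simp only [h1, h2, and_false, or_false, false_or]
      · exact horient
  · rintro a b (h | ⟨rfl, rfl⟩)
    · exact hC a b h
    · exact hle

lemma restrict_cond (hO : IsOrientation G O) (hA : IsAcyclicRel O)
    (hC : ∀ a b, O a b → σ b ≤ σ a) :
    IsOrientation (Gd G u v) (fun a b => O a b ∧ (Gd G u v).Adj a b) ∧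
      IsAcyclicRel (fun a b => O a b ∧ (Gd G u v).Adj a b) ∧
      ∀ a b, (O a b ∧ (Gd G u v).Adj a b) → σ b ≤ σ a := by
  refine ⟨⟨fun a b h => h.2, ?_⟩, acyclic_mono (fun a b h => h.1) hA, fun a b h => hC a b h.1⟩
  intro a b hab
  have := hO.2 a b (Gd_adj.mp hab).1
  constructor
  · rintro ⟨h1, _⟩ ⟨h2, _⟩
    exact (this.mp h1) h2
  · intro h
    refine ⟨?_, hab⟩
    by_contra h3
    have : O b a := by
      rcases hO.2 b a (Gd_adj.mp hab).1.symm with ⟨m1, m2⟩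
      exact m2 h3
    exact h ⟨this, hab.symm⟩

lemma restore_eq {x y : V} (hxy : (x = u ∧ y = v) ∨ (x = v ∧ y = u))
    (hO : IsOrientation G O) (hd : O x y) :
    (addE (fun a b => O a b ∧ (Gd G u v).Adj a b) x y) = O := by
  have hGxy : G.Adj x y := hO.1 x y hd
  funext a b
  apply propext
  constructor
  · rintro (⟨h, _⟩ | ⟨rfl, rfl⟩)
    · exact h
    · exact hd
  · intro h
    by_cases hc : (a = u ∧ b = v) ∨ (a = v ∧ b = u)
    · have hab2 : (a = x ∧ b = y) ∨ (a = y ∧ b = x) := by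
        rcases hc with ⟨rfl, rfl⟩ | ⟨rfl, rfl⟩ <;>
          rcases hxy with ⟨rfl, rfl⟩ | ⟨rfl, rfl⟩ <;> tauto
      rcases hab2 with ⟨h1, h2⟩ | ⟨h1, h2⟩
      · exact Or.inr ⟨h1, h2⟩
      · refine absurd ?_ ((hO.2 x y hGxy).mp hd)
        rw [← h1, ← h2]
        exact h
    · exact Or.inl ⟨h, Gd_adj.mpr ⟨hO.1 a b h, hc⟩⟩
end PairsSec

-- === contraction of orientations ===
section ContractOr
variable {V : Type*} {u v : V} {k : ℕ} {G : SimpleGraph V}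
variable {σ : V → Fin k} {O' : V → V → Prop}

lemma proj_ne_of_Gd (hne : u ≠ v) {a b : V} (h : (Gd G u v).Adj a b) :
    proj u v hne a ≠ proj u v hne b := by
  intro he
  rcases proj_eq_cases hne he with rfl | ⟨rfl, rfl⟩ | ⟨rfl, rfl⟩
  · exact h.ne rfl
  · exact not_Gd_uv h
  · exact not_Gd_vu h

lemma Gc_adj_of_Gd (hne : u ≠ v) {a b : V} (h : (Gd G u v).Adj a b) :
    (Gc G u v hne).Adj (proj u v hne a) (proj u v hne b) :=
  ⟨proj_ne_of_Gd hne h, a, b, h, rfl, rfl⟩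

lemma transGen_of_reflTransGen_ne {r : V → V → Prop} {x y : V}
    (h : Relation.ReflTransGen r x y) (hne : x ≠ y) : Relation.TransGen r x y := by
  rcases Relation.reflTransGen_iff_eq_or_transGen.mp h with he | ht
  · exact absurd he.symm hne
  · exact ht

lemma no_opp (hne : u ≠ v) (hO : IsOrientation (Gd G u v) O')
    (hAuv : IsAcyclicRel (addE O' u v)) (hAvu : IsAcyclicRel (addE O' v u))
    {x y s t : V} (h1 : O' x y) (h2 : O' s t)
    (hxt : proj u v hne x = proj u v hne t) (hys : proj u v hne y = proj u v hne s) :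
    False := by
  have npvu : ¬ Relation.ReflTransGen O' v u := np_of_acyclic_add hAuv
  have npuv : ¬ Relation.ReflTransGen O' u v := np_of_acyclic_add (u := v) (v := u) hAvu
  rcases proj_eq_cases hne hxt with h3 | ⟨h3, h4⟩ | ⟨h3, h4⟩ <;>
    rcases proj_eq_cases hne hys with h5 | ⟨h5, h6⟩ | ⟨h5, h6⟩
  -- x = t, y = s
  · subst h3; subst h5
    exact ((hO.2 x y (hO.1 x y h1)).mp h1) h2
  -- x = t, y = u, s = v
  · subst h3; subst h5; subst h6
    exact npvu ((Relation.ReflTransGen.single h2).tail h1)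
  -- x = t, y = v, s = u
  · subst h3; subst h5; subst h6
    exact npuv ((Relation.ReflTransGen.single h2).tail h1)
  -- x = u, t = v, y = s
  · subst h3; subst h4; subst h5
    exact npuv ((Relation.ReflTransGen.single h1).tail h2)
  -- x = u, t = v, y = u, s = v : O' u u impossible
  · subst h3; subst h4; subst h5; subst h6
    exact (hO.1 _ _ h1).ne rfl
  -- x = u, t = v, y = v, s = u : O' u v
  · subst h3; subst h4; subst h5; subst h6
    exact not_Gd_uv (hO.1 _ _ h1)
  -- x = v, t = u, y = s
  · subst h3; subst h4; subst h5
    exact npvu ((Relation.ReflTransGen.single h1).tail h2)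
  -- x = v, t = u, y = u, s = v : O' v u
  · subst h3; subst h4; subst h5; subst h6
    exact not_Gd_vu (hO.1 _ _ h1)
  -- x = v, t = u, y = v, s = u : O' v v
  · subst h3; subst h4; subst h5; subst h6
    exact (hO.1 _ _ h1).ne rfl

/-- contracted orientation -/
def cOr (hne : u ≠ v) (O' : V → V → Prop) :
    {x : V // x ≠ v} → {x : V // x ≠ v} → Prop :=
  fun a b => ∃ a' b', O' a' b' ∧ proj u v hne a' = a ∧ proj u v hne b' = b

/-- pulled-back orientation -/
def pbOr (hne : u ≠ v) (G : SimpleGraph V) (u' v' : V)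
    (O'' : {x : V // x ≠ v} → {x : V // x ≠ v} → Prop) : V → V → Prop :=
  fun a b => O'' (proj u v hne a) (proj u v hne b) ∧ (Gd G u' v').Adj a b

lemma cOr_orientation (hne : u ≠ v) (hO : IsOrientation (Gd G u v) O')
    (hAuv : IsAcyclicRel (addE O' u v)) (hAvu : IsAcyclicRel (addE O' v u)) :
    IsOrientation (Gc G u v hne) (cOr hne O') := by
  constructor
  · rintro a b ⟨a', b', h, ha, hb⟩
    exact ha ▸ hb ▸ Gc_adj_of_Gd hne (hO.1 a' b' h)
  · rintro a b ⟨hab, a', b', hGd, ha, hb⟩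
    constructor
    · rintro ⟨x, y, h1, hx, hy⟩ ⟨s, t, h2, hs, ht⟩
      exact no_opp hne hO hAuv hAvu h1 h2 (hx.trans ht.symm) (hy.trans hs.symm)
    · intro hn
      by_cases h : O' a' b'
      · exact ⟨a', b', h, ha, hb⟩
      · have : O' b' a' := by
          by_contra h2
          exact h ((hO.2 a' b' hGd).mpr h2)
        exact absurd ⟨b', a', this, hb, ha⟩ hn

/-- hat relation: O' plus both directions between u and v -/
lemma cOr_path (hne : u ≠ v) {a b : {x : V // x ≠ v}}
    (h : Relation.TransGen (cOr hne O') a b) :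
    ∃ p m w, proj u v hne p = a ∧ proj u v hne w = b ∧
      Relation.ReflTransGen
        (fun a b => (O' a b ∨ (a = u ∧ b = v)) ∨ (a = v ∧ b = u)) p m ∧ O' m w := by
  induction h with
  | single h =>
    obtain ⟨a', b', h, ha, hb⟩ := h
    exact ⟨a', a', b', ha, hb, Relation.ReflTransGen.refl, h⟩
  | tail _ h ih =>
    obtain ⟨b', c', hbc, hb, hc⟩ := h
    obtain ⟨p, m, w, hp, hw, hpm, hmw⟩ := ih
    have hwb' : Relation.ReflTransGen
        (fun a b => (O' a b ∨ (a = u ∧ b = v)) ∨ (a = v ∧ b = u)) w b' := by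
      rcases proj_eq_cases hne (hw.trans hb.symm) with h3 | ⟨h3, h4⟩ | ⟨h3, h4⟩
      · exact h3 ▸ Relation.ReflTransGen.refl
      · exact Relation.ReflTransGen.single (Or.inl (Or.inr ⟨h3, h4⟩))
      · exact Relation.ReflTransGen.single (Or.inr ⟨h3, h4⟩)
    exact ⟨p, b', c', hp, hc, (hpm.tail (Or.inl (Or.inl hmw))).trans hwb', hbc⟩

lemma no_hat_cycle (hne : u ≠ v) (hA : IsAcyclicRel O')
    (hAuv : IsAcyclicRel (addE O' u v)) (hAvu : IsAcyclicRel (addE O' v u))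
    {x m : V}
    (hxm : Relation.ReflTransGen
      (fun a b => (O' a b ∨ (a = u ∧ b = v)) ∨ (a = v ∧ b = u)) x m)
    (hmx : O' m x) : False := by
  have npvu : ¬ Relation.ReflTransGen O' v u := np_of_acyclic_add hAuv
  have npuv : ¬ Relation.ReflTransGen O' u v := np_of_acyclic_add (u := v) (v := u) hAvu
  rcases reflTransGen_union_single (u := v) (v := u) hxm with h | ⟨h1, h2⟩
  · rcases reflTransGen_union_single h with g | ⟨g1, g2⟩
    · exact hA x (Relation.TransGen.tail' g hmx)
    · exact npvu ((g2.tail hmx).trans g1)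
  · rcases reflTransGen_union_single h1 with c | ⟨c, _⟩ <;>
      rcases reflTransGen_union_single h2 with d | ⟨_, d⟩
    · exact npuv ((d.tail hmx).trans c)
    · exact hA v ((Relation.TransGen.tail' d hmx).trans_left c)
    · exact hA u ((Relation.TransGen.tail' d hmx).trans_left c)
    · exact npvu ((d.tail hmx).trans c)

lemma cOr_acyclic (hne : u ≠ v) (hA : IsAcyclicRel O')
    (hAuv : IsAcyclicRel (addE O' u v)) (hAvu : IsAcyclicRel (addE O' v u)) :
    IsAcyclicRel (cOr hne O') := by
  intro a ha
  obtain ⟨p, m, w, hp, hw, hpm, hmw⟩ := cOr_path hne ha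
  rcases proj_eq_cases hne (hw.trans hp.symm) with h3 | ⟨h3, h4⟩ | ⟨h3, h4⟩
  · exact no_hat_cycle hne hA hAuv hAvu hpm (h3 ▸ hmw)
  · exact no_hat_cycle hne hA hAuv hAvu
      (Relation.ReflTransGen.head (Or.inl (Or.inr ⟨h3, h4⟩)) hpm) hmw
  · exact no_hat_cycle hne hA hAuv hAvu
      (Relation.ReflTransGen.head (Or.inr ⟨h3, h4⟩) hpm) hmw

lemma cOr_compat (hne : u ≠ v) (hσ : σ u = σ v)
    (hC : ∀ a b, O' a b → σ b ≤ σ a) :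
    ∀ a b, cOr hne O' a b → σ ↑b ≤ σ ↑a := by
  rintro a b ⟨a', b', h, ha, hb⟩
  rw [← ha, ← hb, comp_proj hne hσ, comp_proj hne hσ]
  exact hC a' b' h

end ContractOr

-- === pullback ===
section Pullback
variable {V : Type*} {u v : V} {k : ℕ} {G : SimpleGraph V}
variable {τ : {x : V // x ≠ v} → Fin k}
variable {O'' : {x : V // x ≠ v} → {x : V // x ≠ v} → Prop} {O' : V → V → Prop}

lemma pb_orientation (hne : u ≠ v) (hO'' : IsOrientation (Gc G u v hne) O'') :
    IsOrientation (Gd G u v) (pbOr hne G u v O'') := by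
  constructor
  · exact fun a b h => h.2
  · intro a b hab
    have hGc : (Gc G u v hne).Adj (proj u v hne a) (proj u v hne b) := Gc_adj_of_Gd hne hab
    have := hO''.2 _ _ hGc
    constructor
    · rintro ⟨h1, _⟩ ⟨h2, _⟩
      exact (this.mp h1) h2
    · intro hn
      refine ⟨?_, hab⟩
      by_contra h3
      exact hn ⟨(hO''.2 _ _ hGc.symm).mpr h3, hab.symm⟩

lemma pb_acyclic (hne : u ≠ v) (hA'' : IsAcyclicRel O'') :
    IsAcyclicRel (pbOr hne G u v O'') := by
  intro a ha
  exact hA'' (proj u v hne a)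
    (Relation.TransGen.lift (p := O'') (proj u v hne) (fun a b h => h.1) a a ha)

lemma pb_acyclic_add (hne : u ≠ v) (hA'' : IsAcyclicRel O'')
    {x y : V} (hxy : proj u v hne x = proj u v hne y) (hxyne : x ≠ y) :
    IsAcyclicRel (addE (pbOr hne G u v O'') x y) := by
  apply acyclic_add (pb_acyclic hne hA'')
  intro hp
  have ht := Relation.TransGen.lift (p := O'') (proj u v hne) (fun a b h => h.1) _ _
    (transGen_of_reflTransGen_ne hp (Ne.symm hxyne))
  rw [Function.onFun, hxy] at ht
  exact hA'' _ ht

lemma pb_compat (hne : u ≠ v) (hC'' : ∀ a b, O'' a b → τ b ≤ τ a) :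
    ∀ a b, pbOr hne G u v O'' a b →
      τ (proj u v hne b) ≤ τ (proj u v hne a) :=
  fun a b h => hC'' _ _ h.1

lemma cOr_pbOr (hne : u ≠ v) (hO'' : IsOrientation (Gc G u v hne) O'') :
    cOr hne (pbOr hne G u v O'') = O'' := by
  funext a b
  apply propext
  constructor
  · rintro ⟨a', b', ⟨h, _⟩, ha, hb⟩
    exact ha ▸ hb ▸ h
  · intro h
    obtain ⟨hab, a', b', hGd, ha, hb⟩ := hO''.1 a b h
    exact ⟨a', b', ⟨by rwa [ha, hb], hGd⟩, ha, hb⟩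

lemma pbOr_cOr (hne : u ≠ v) (hO : IsOrientation (Gd G u v) O')
    (hAuv : IsAcyclicRel (addE O' u v)) (hAvu : IsAcyclicRel (addE O' v u)) :
    pbOr hne G u v (cOr hne O') = O' := by
  funext a b
  apply propext
  constructor
  · rintro ⟨⟨x, y, hxy, hx, hy⟩, hGd⟩
    by_cases h : O' a b
    · exact h
    · exfalso
      have hba : O' b a := by
        by_contra h2
        exact h ((hO.2 a b hGd).mpr h2)
      exact no_opp hne hO hAuv hAvu hxy hba hx hy
  · intro h
    exact ⟨⟨a, b, h, rfl, rfl⟩, hO.1 a b h⟩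

end Pullback

-- === global pair equivalences ===
section PairEquivs
variable {V : Type*} {k : ℕ}

abbrev Pairs (G : SimpleGraph V) (k : ℕ) :=
  {p : (V → Fin k) × (V → V → Prop) //
    IsOrientation G p.2 ∧ IsAcyclicRel p.2 ∧ ∀ u w, p.2 u w → p.1 w ≤ p.1 u}

def Dbl (u v : V) (p : (V → Fin k) × (V → V → Prop)) : Prop :=
  p.1 u = p.1 v ∧ IsAcyclicRel (addE p.2 u v) ∧ IsAcyclicRel (addE p.2 v u)

variable {u v : V} {G : SimpleGraph V}

lemma restrict_addE {O' : V → V → Prop} {x y : V}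
    (hxy : (x = u ∧ y = v) ∨ (x = v ∧ y = u))
    (hO' : IsOrientation (Gd G u v) O') :
    (fun a b => addE O' x y a b ∧ (Gd G u v).Adj a b) = O' := by
  funext a b
  apply propext
  constructor
  · rintro ⟨h | ⟨rfl, rfl⟩, hGd⟩
    · exact h
    · rcases hxy with ⟨rfl, rfl⟩ | ⟨rfl, rfl⟩
      · exact absurd hGd not_Gd_uv
      · exact absurd hGd not_Gd_vu
  · intro h
    exact ⟨Or.inl h, hO'.1 a b h⟩

/-- contraction bijection -/
noncomputable def contractEquiv (hne : u ≠ v) :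
    {b : Pairs (Gd G u v) k // Dbl u v b.1} ≃ Pairs (Gc G u v hne) k where
  toFun b :=
    ⟨(fun a => b.1.1.1 ↑a, cOr hne b.1.1.2),
      cOr_orientation hne b.1.2.1 b.2.2.1 b.2.2.2,
      cOr_acyclic hne b.1.2.2.1 b.2.2.1 b.2.2.2,
      cOr_compat hne b.2.1 b.1.2.2.2⟩
  invFun c :=
    ⟨⟨(fun x => c.1.1 (proj u v hne x), pbOr hne G u v c.1.2),
        pb_orientation hne c.2.1, pb_acyclic hne c.2.2.1,
        fun a b h => pb_compat hne c.2.2.2 a b h⟩,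
      by simp,
      pb_acyclic_add hne c.2.2.1 (by simp) hne,
      pb_acyclic_add hne c.2.2.1 (by simp) (Ne.symm hne)⟩
  left_inv b := by
    apply Subtype.ext
    apply Subtype.ext
    apply Prod.ext
    · funext x
      exact comp_proj hne b.2.1 x
    · exact pbOr_cOr hne b.1.2.1 b.2.2.1 b.2.2.2
  right_inv c := by
    apply Subtype.ext
    apply Prod.ext
    · funext a
      exact congrArg c.1.1 (proj_coe hne a)
    · exact cOr_pbOr hne c.2.1

open scoped Classical in
/-- the main splitting bijection -/
noncomputable def pairSplit (hne : u ≠ v) (huv : G.Adj u v) :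
    Pairs G k ≃ (Pairs (Gd G u v) k) ⊕ {b : Pairs (Gd G u v) k // Dbl u v b.1} where
  toFun p :=
    let q : Pairs (Gd G u v) k :=
      ⟨(p.1.1, fun a b => p.1.2 a b ∧ (Gd G u v).Adj a b),
        restrict_cond p.2.1 p.2.2.1 p.2.2.2⟩
    if h : p.1.2 u v ∧ Dbl u v q.1 then Sum.inr ⟨q, h.2⟩ else Sum.inl q
  invFun s :=
    match s with
    | Sum.inl b =>
        if h : b.1.1 u ≤ b.1.1 v ∧ IsAcyclicRel (addE b.1.2 v u) then
          ⟨(b.1.1, addE b.1.2 v u),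
            lift_cond huv (Or.inr ⟨rfl, rfl⟩) b.2.1 b.2.2.2 h.1 h.2⟩
        else
          ⟨(b.1.1, addE b.1.2 u v),
            lift_cond huv (Or.inl ⟨rfl, rfl⟩) b.2.1 b.2.2.2
              (lift_choice hne b.2.2.1 b.2.2.2 h).1
              (lift_choice hne b.2.2.1 b.2.2.2 h).2⟩
    | Sum.inr b =>
        ⟨(b.1.1.1, addE b.1.1.2 u v),
          lift_cond huv (Or.inl ⟨rfl, rfl⟩) b.1.2.1 b.1.2.2.2
            (le_of_eq b.2.1.symm) b.2.2.1⟩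
  left_inv p := by
    obtain ⟨⟨σ, O⟩, hO, hA, hC⟩ := p
    dsimp only
    split_ifs with h
    · apply Subtype.ext
      apply Prod.ext
      · rfl
      · exact restore_eq (Or.inl ⟨rfl, rfl⟩) hO h.1
    · dsimp only
      split_ifs with h2
      · have hd : O v u := by
          by_contra hvu
          have hduv : O u v := by
            by_contra huv2
            exact hvu ((hO.2 v u huv.symm).mpr huv2)
          refine h ⟨hduv, le_antisymm (h2.1) (hC u v hduv), ?_, h2.2⟩
          rw [restore_eq (Or.inl ⟨rfl, rfl⟩) hO hduv]
          exact hA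
        apply Subtype.ext
        apply Prod.ext
        · rfl
        · exact restore_eq (Or.inr ⟨rfl, rfl⟩) hO hd
      · have hd : O u v := by
          by_contra huv2
          have hd2 : O v u := (hO.2 v u huv.symm).mpr huv2
          refine h2 ⟨hC v u hd2, ?_⟩
          rw [restore_eq (Or.inr ⟨rfl, rfl⟩) hO hd2]
          exact hA
        apply Subtype.ext
        apply Prod.ext
        · rfl
        · exact restore_eq (Or.inl ⟨rfl, rfl⟩) hO hd
  right_inv s := by
    rcases s with b | b
    · obtain ⟨⟨σ, O'⟩, hO, hA, hC⟩ := b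
      dsimp only
      split_ifs with h1 h2 h3
      · exfalso
        rcases h2.1 with hx | ⟨hx, _⟩
        · exact not_Gd_uv (hO.1 _ _ hx)
        · exact hne hx
      · exact congrArg Sum.inl (Subtype.ext (Prod.ext rfl
          (restrict_addE (Or.inr ⟨rfl, rfl⟩) hO)))
      · exfalso
        have hres : (fun a b => addE O' u v a b ∧ (Gd G u v).Adj a b) = O' :=
          restrict_addE (Or.inl ⟨rfl, rfl⟩) hO
        have hD := h3.2
        rw [hres] at hD
        exact h1 ⟨le_of_eq hD.1, hD.2.2⟩
      · exact congrArg Sum.inl (Subtype.ext (Prod.ext rfl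
          (restrict_addE (Or.inl ⟨rfl, rfl⟩) hO)))
    · obtain ⟨⟨⟨σ, O'⟩, hO, hA, hC⟩, hD⟩ := b
      have hres : (fun a b => addE O' u v a b ∧ (Gd G u v).Adj a b) = O' :=
        restrict_addE (Or.inl ⟨rfl, rfl⟩) hO
      dsimp only
      split_ifs with h1
      · exact congrArg Sum.inr (Subtype.ext (Subtype.ext (Prod.ext rfl hres)))
      · exfalso
        apply h1
        refine ⟨Or.inr ⟨rfl, rfl⟩, ?_⟩
        rw [hres]
        exact hD

end PairEquivs

-- === counting lemmas ===
section Counting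
variable {V : Type*} {u v : V} {G : SimpleGraph V} {k m : ℕ}

instance instFinitePairs [Finite V] (G : SimpleGraph V) (k : ℕ) : Finite (Pairs G k) :=
  Subtype.finite

lemma card_split {α : Type*} [Finite α] (p q : α → Prop) :
    Nat.card {x // p x} = Nat.card {x // p x ∧ q x} + Nat.card {x // p x ∧ ¬ q x} := by
  classical
  calc Nat.card {x // p x}
      = Nat.card ({a : {x // p x} // q ↑a} ⊕ {a : {x // p x} // ¬ q ↑a}) :=
        (Nat.card_congr (Equiv.sumCompl _)).symm
    _ = Nat.card {a : {x // p x} // q ↑a} + Nat.card {a : {x // p x} // ¬ q ↑a} :=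
        Nat.card_sum
    _ = _ := by
        rw [Nat.card_congr (Equiv.subtypeSubtypeEquivSubtypeInter p q),
          Nat.card_congr (Equiv.subtypeSubtypeEquivSubtypeInter p (fun x => ¬ q x))]

lemma pairs_rec [Finite V] (hne : u ≠ v) (huv : G.Adj u v) :
    Nat.card (Pairs G k) =
      Nat.card (Pairs (Gd G u v) k) + Nat.card (Pairs (Gc G u v hne) k) := by
  rw [Nat.card_congr (pairSplit hne huv), Nat.card_sum,
    Nat.card_congr (contractEquiv hne)]

lemma color_rec [Finite V] (hne : u ≠ v) (huv : G.Adj u v) (m : ℕ) :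
    properColoringCount (Gd G u v) m =
      properColoringCount G m + properColoringCount (Gc G u v hne) m := by
  unfold properColoringCount
  have e3 : Nat.card {f : V → Fin m // ∀ a b, (Gd G u v).Adj a b → f a ≠ f b} =
      Nat.card {f : V → Fin m // (∀ a b, (Gd G u v).Adj a b → f a ≠ f b) ∧ f u = f v} +
      Nat.card {f : V → Fin m // (∀ a b, (Gd G u v).Adj a b → f a ≠ f b) ∧ ¬ f u = f v} :=
    card_split _ _
  have e1 : Nat.card {f : V → Fin m // (∀ a b, (Gd G u v).Adj a b → f a ≠ f b) ∧ f u = f v}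
      = Nat.card {g : {x : V // x ≠ v} → Fin m //
          ∀ a b, (Gc G u v hne).Adj a b → g a ≠ g b} :=
    Nat.card_congr (colorEquiv2 hne)
  have e2 : Nat.card {f : V → Fin m // (∀ a b, (Gd G u v).Adj a b → f a ≠ f b) ∧ ¬ f u = f v}
      = Nat.card {f : V → Fin m // ∀ a b, G.Adj a b → f a ≠ f b} :=
    Nat.card_congr (colorEquiv1 hne huv)
  rw [e3, e1, e2]
  exact Nat.add_comm _ _

lemma edge_lt [Finite V] (huv : G.Adj u v) :
    Nat.card (Gd G u v).edgeSet < Nat.card G.edgeSet := by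
  have h1 : (Gd G u v).edgeSet = G.edgeSet \ {s(u,v)} :=
    SimpleGraph.edgeSet_deleteEdges _
  rw [h1, Nat.card_coe_set_eq, Nat.card_coe_set_eq]
  exact Set.ncard_diff_singleton_lt_of_mem (G.mem_edgeSet.mpr huv) (Set.toFinite _)

lemma edge_le_c [Finite V] (hne : u ≠ v) :
    Nat.card (Gc G u v hne).edgeSet ≤ Nat.card (Gd G u v).edgeSet := by
  classical
  have h : ∀ e : (Gc G u v hne).edgeSet,
      ∃ e' : (Gd G u v).edgeSet, Sym2.map (proj u v hne) ↑e' = ↑e := by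
    rintro ⟨e, he⟩
    induction e with
    | _ a b =>
      obtain ⟨hab, a', b', hGd, ha, hb⟩ := (SimpleGraph.mem_edgeSet _).mp he
      refine ⟨⟨s(a', b'), (SimpleGraph.mem_edgeSet _).mpr hGd⟩, ?_⟩
      simp only [Sym2.map_pair_eq, ha, hb]
  choose f hf using h
  refine Nat.card_le_card_of_injective f ?_
  intro e1 e2 he
  apply Subtype.ext
  rw [← hf e1, ← hf e2, he]

lemma nat_card_ne [Finite V] (v : V) :
    Nat.card V = Nat.card {x : V // x ≠ v} + 1 := by
  classical
  have h1 : Nat.card V = Nat.card ({x : V // x = v} ⊕ {x : V // ¬ x = v}) :=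
    (Nat.card_congr (Equiv.sumCompl _)).symm
  have h2 : Nat.card {x : V // x = v} = 1 := by
    haveI : Unique {x : V // x = v} :=
      ⟨⟨⟨v, rfl⟩⟩, by rintro ⟨x, hx⟩; exact Subtype.ext hx⟩
    exact Nat.card_unique
  have h3 : Nat.card {x : V // ¬ x = v} = Nat.card {x : V // x ≠ v} := rfl
  rw [h1, Nat.card_sum, h2, h3]
  omega

lemma falseRel_acyclic : IsAcyclicRel (fun _ _ : V => False) := by
  intro w hw
  cases hw with
  | single h => exact h
  | tail _ h => exact h

lemma base_color [Fintype V] (hno : ∀ a b : V, ¬ G.Adj a b) (m : ℕ) :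
    properColoringCount G m = m ^ (Fintype.card V) := by
  classical
  unfold properColoringCount
  rw [Nat.card_congr (Equiv.subtypeUnivEquiv (fun f a b h => absurd h (hno a b)))]
  rw [Nat.card_eq_fintype_card, Fintype.card_fun, Fintype.card_fin]

noncomputable def basePairsEquiv (hno : ∀ a b : V, ¬ G.Adj a b) :
    Pairs G k ≃ (V → Fin k) where
  toFun p := p.1.1
  invFun σ := ⟨(σ, fun _ _ => False),
    ⟨fun a b h => h.elim, fun a b hab => absurd hab (hno a b)⟩,
    falseRel_acyclic, fun a b h => h.elim⟩
  left_inv p := by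
    apply Subtype.ext
    apply Prod.ext
    · rfl
    · funext a b
      exact propext ⟨False.elim, fun h => absurd (p.2.1.1 a b h) (hno a b)⟩
  right_inv σ := rfl

lemma base_pairs [Fintype V] (hno : ∀ a b : V, ¬ G.Adj a b) (k : ℕ) :
    Nat.card (Pairs G k) = k ^ (Fintype.card V) := by
  classical
  rw [Nat.card_congr (basePairsEquiv hno)]
  rw [Nat.card_eq_fintype_card, Fintype.card_fun, Fintype.card_fin]

lemma no_edge_case [Fintype V] (hno : ∀ a b : V, ¬ G.Adj a b) :
    ∃ Q : Polynomial ℤ, (∀ m : ℕ, Q.eval (m : ℤ) = properColoringCount G m) ∧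
      ∀ k : ℕ, 1 ≤ k →
        (-1 : ℤ) ^ (Fintype.card V) * Q.eval (-(k : ℤ)) = Nat.card (Pairs G k) := by
  refine ⟨Polynomial.X ^ (Fintype.card V), ?_, ?_⟩
  · intro m
    rw [Polynomial.eval_pow, Polynomial.eval_X, base_color hno m]
    push_cast
    ring
  · intro k hk
    rw [Polynomial.eval_pow, Polynomial.eval_X, base_pairs hno k]
    rw [← mul_pow]
    push_cast
    ring

end Counting

universe u

lemma stanley_main : ∀ (N : ℕ) (V : Type u) [Fintype V] (G : SimpleGraph V),
    Fintype.card V + Nat.card G.edgeSet ≤ N →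
    ∃ Q : Polynomial ℤ, (∀ m : ℕ, Q.eval (m : ℤ) = properColoringCount G m) ∧
      ∀ k : ℕ, 1 ≤ k →
        (-1 : ℤ) ^ (Fintype.card V) * Q.eval (-(k : ℤ)) = Nat.card (Pairs G k) := by
  intro N
  induction N with
  | zero =>
    intro V _ G hle
    have hV : Fintype.card V = 0 := by omega
    haveI : IsEmpty V := Fintype.card_eq_zero_iff.mp hV
    exact no_edge_case (fun a b => (IsEmpty.false a).elim)
  | succ N ih =>
    intro V _ G hle
    by_cases hE : ∃ a b, G.Adj a b
    · obtain ⟨u, v, huv⟩ := hE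
      have hne : u ≠ v := huv.ne
      have hpos : 1 ≤ Fintype.card V := Fintype.card_pos_iff.mpr ⟨u⟩
      have hel := edge_lt (V := V) huv
      have h1 : Fintype.card V + Nat.card (Gd G u v).edgeSet ≤ N := by omega
      have hcv : Nat.card V = Nat.card {x : V // x ≠ v} + 1 := nat_card_ne v
      rw [Nat.card_eq_fintype_card] at hcv
      haveI : Fintype {x : V // x ≠ v} := Fintype.ofFinite _
      rw [Nat.card_eq_fintype_card] at hcv
      have hec := edge_le_c (G := G) (u := u) hne
      have h2 : Fintype.card {x : V // x ≠ v} + Nat.card (Gc G u v hne).edgeSet ≤ N := by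
        omega
      obtain ⟨Q1, hQ1, hR1⟩ := ih V (Gd G u v) h1
      obtain ⟨Q2, hQ2, hR2⟩ := ih {x : V // x ≠ v} (Gc G u v hne) h2
      refine ⟨Q1 - Q2, ?_, ?_⟩
      · intro m
        have hc : (properColoringCount (Gd G u v) m : ℤ) =
            properColoringCount G m + properColoringCount (Gc G u v hne) m := by
          exact_mod_cast congrArg (Nat.cast : ℕ → ℤ) (color_rec hne huv m)
        rw [Polynomial.eval_sub, hQ1 m, hQ2 m]
        linarith
      · intro k hk
        have hp : (Nat.card (Pairs G k) : ℤ) =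
            Nat.card (Pairs (Gd G u v) k) + Nat.card (Pairs (Gc G u v hne) k) := by
          exact_mod_cast congrArg (Nat.cast : ℕ → ℤ) (pairs_rec hne huv)
        have hR1' := hR1 k hk
        have hR2' := hR2 k hk
        have hpow : (-1 : ℤ) ^ (Fintype.card V) =
            ((-1) ^ (Fintype.card {x : V // x ≠ v})) * (-1) := by
          rw [hcv, pow_succ]
        rw [Polynomial.eval_sub, hpow]
        rw [hpow] at hR1'
        linear_combination hR1' + hR2' - hp
    · push_neg at hE
      exact no_edge_case hE

/-- Stanley's reciprocity theorem: `(-1)^|V| χ_G(-k)` counts pairs `(σ, O)` of a map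
`σ : V → {1,…,k}` and an acyclic orientation `O` of `G` such that `u → w` implies
`σ(u) ≥ σ(w)`. -/
theorem neg_eval_eq_compatible_pairs_count {V : Type*} [Fintype V]
    (G : SimpleGraph V) (P : Polynomial ℤ) (hP : IsChromaticPoly G P)
    (k : ℕ) (hk : 1 ≤ k) :
    (-1 : ℤ) ^ (Fintype.card V) * P.eval (-(k : ℤ)) =
      Nat.card {p : (V → Fin k) × (V → V → Prop) //
        IsOrientation G p.2 ∧ IsAcyclicRel p.2 ∧ ∀ u w, p.2 u w → p.1 w ≤ p.1 u} := by
  obtain ⟨Q, hQ, hR⟩ := stanley_main (Fintype.card V + Nat.card G.edgeSet) V G le_rfl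
  have hPQ : P = Q := by
    apply Polynomial.eq_of_infinite_eval_eq
    apply Set.infinite_of_injective_forall_mem (f := (Nat.cast : ℕ → ℤ)) Nat.cast_injective
    intro n
    simp only [Set.mem_setOf_eq]
    rw [hP n, hQ n]
  rw [hPQ]
  exact hR k hk
end

section
/- Let G = (V,E) be a finite simple graph and m ≥ 2. The map sending a point x ∈ ℝ^V in a bounded region of the complement of A(G;m) to the pair consisting of (i) the orientation of G orienting each edge {u,w} as u → w when x_u > x_w, and (ii) the coloring σ(v) = ⌈x_v⌉, induces a bijection between bounded connected components of ℝ^V ∖ A(G;m) and pairs (O, σ) of an acyclic orientation O of G together with a coloring σ : V → {1, …, m−2} satisfying σ(u) ≥ σ(w) whenever u → w in O. -/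
open SimpleGraph Polynomial

/-- The complement in `ℝ^V` of the arrangement `A(G;m)`, consisting of the hyperplanes
`z_u = z_w` for edges `{u,w}` of `G` and `z_v = i` for `v ∈ V`, `i ∈ {0,…,m-2}`. -/
def arrComplement {V : Type*} (G : SimpleGraph V) (m : ℕ) : Set (V → ℝ) :=
  {z | (∀ u w, G.Adj u w → z u ≠ z w) ∧ ∀ v : V, ∀ i : ℕ, i ≤ m - 2 → z v ≠ (i : ℝ)}

/-- The bounded regions of `A(G;m)`. -/
def BoundedComponents {V : Type*} (G : SimpleGraph V) (m : ℕ) :=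
  {C : Set (V → ℝ) //
    (∃ x ∈ arrComplement G m, C = connectedComponentIn (arrComplement G m) x) ∧
    Bornology.IsBounded C}

/-- Pairs of an acyclic orientation of `G` and a compatible coloring in `{1,…,m-2}`. -/
def CompatPairs {V : Type*} (G : SimpleGraph V) (m : ℕ) :=
  {p : (V → V → Prop) × (V → ℤ) // IsOrientation G p.1 ∧ IsAcyclicRel p.1 ∧
    (∀ v, 1 ≤ p.2 v ∧ p.2 v ≤ (m : ℤ) - 2) ∧ ∀ u w, p.1 u w → p.2 w ≤ p.2 u}

open Set

section Aux
variable {V : Type*} [Fintype V] {G : SimpleGraph V} {m : ℕ}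

/-- Points of a bounded component have all coordinates strictly between 0 and m-2. -/
lemma coord_mem_Ioo (hm : 2 ≤ m) {x₀ : V → ℝ} (hx₀ : x₀ ∈ arrComplement G m)
    (hb : Bornology.IsBounded (connectedComponentIn (arrComplement G m) x₀))
    {x : V → ℝ} (hx : x ∈ connectedComponentIn (arrComplement G m) x₀) (v : V) :
    0 < x v ∧ x v < (m : ℝ) - 2 := by
  classical
  set F := arrComplement G m with hF
  have hxF : x ∈ F := connectedComponentIn_subset F x₀ hx
  have hcomp : connectedComponentIn F x₀ = connectedComponentIn F x := connectedComponentIn_eq hx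
  rw [hcomp] at hb
  have hcast : ((m - 2 : ℕ) : ℝ) = (m : ℝ) - 2 := by
    push_cast [Nat.cast_sub hm]; ring
  obtain ⟨M, hM⟩ := isBounded_iff_forall_norm_le.mp hb
  have hM0 : 0 ≤ M := le_trans (norm_nonneg x) (hM x (mem_connectedComponentIn hxF))
  have hne : Nonempty V := ⟨v⟩
  constructor
  · -- 0 < x v
    by_contra hle
    push_neg at hle
    have hxvne : x v ≠ 0 := by
      have := hxF.2 v 0 (by omega)
      simpa using this
    have hxv : x v < 0 := lt_of_le_of_ne hle hxvne
    obtain ⟨v₀, hv₀⟩ := Finite.exists_max (fun w => -(x w))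
    have hmin : ∀ w, x v₀ ≤ x w := fun w => by have := hv₀ w; linarith
    have hxv₀ : x v₀ < 0 := lt_of_le_of_lt (hmin v) hxv
    -- ray downward
    set p : ℝ → (V → ℝ) := fun t => Function.update x v₀ (x v₀ - t) with hp
    have hpc : Continuous p := by
      apply continuous_pi
      intro w
      rcases eq_or_ne w v₀ with rfl | hw
      · simp only [hp, Function.update_self]; exact continuous_const.sub continuous_id
      · simp only [hp, Function.update_apply, if_neg hw]
        exact continuous_const
    have hsub : p '' Ici 0 ⊆ F := by
      rintro _ ⟨t, ht, rfl⟩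
      constructor
      · intro u w huw
        rcases eq_or_ne u v₀ with rfl | hu
        · have hwne : w ≠ u := (G.ne_of_adj huw).symm
          have h1 : x u ≠ x w := hxF.1 u w huw
          have h2 : x u ≤ x w := hmin w
          simp only [hp, Function.update_apply, if_neg hwne, Function.update_self]
          have : x u - t < x w := by
            rcases lt_of_le_of_ne h2 h1 with h
            simp at ht; linarith
          exact ne_of_lt this
        · rcases eq_or_ne w v₀ with rfl | hw
          · have h1 : x w ≠ x u := hxF.1 w u huw.symm
            have h2 : x w ≤ x u := hmin u
            simp only [hp, Function.update_apply, if_neg hu, Function.update_self]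
            have : x w - t < x u := by
              rcases lt_of_le_of_ne h2 h1 with h
              simp at ht; linarith
            exact (ne_of_lt this).symm
          · simp only [hp, Function.update_apply, if_neg hu, if_neg hw]
            exact hxF.1 u w huw
      · intro w i hi
        rcases eq_or_ne w v₀ with rfl | hw
        · simp only [hp, Function.update_self]
          have : x w - t < 0 := by simp at ht; linarith
          have : x w - t < (i : ℝ) := lt_of_lt_of_le this (by positivity)
          exact ne_of_lt this
        · simp only [hp, Function.update_apply, if_neg hw]
          exact hxF.2 w i hi
    have hxp : x ∈ p '' Ici 0 := ⟨0, self_mem_Ici, by simp [hp]⟩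
    have hpre : IsPreconnected (p '' Ici 0) :=
      (isPreconnected_Ici).image p hpc.continuousOn
    have hray : p '' Ici 0 ⊆ connectedComponentIn F x :=
      hpre.subset_connectedComponentIn hxp hsub
    have hmem : p (M + 1) ∈ connectedComponentIn F x :=
      hray ⟨M + 1, by simp; linarith, rfl⟩
    have := hM _ hmem
    have h1 : ‖p (M + 1) v₀‖ ≤ ‖p (M + 1)‖ := norm_le_pi_norm _ v₀
    have h2 : p (M + 1) v₀ = x v₀ - (M + 1) := by simp [hp]
    rw [h2] at h1
    have : |x v₀ - (M + 1)| ≤ M := le_trans h1 this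
    rw [abs_le] at this
    linarith [this.1]
  · -- x v < m - 2
    by_contra hle
    push_neg at hle
    have hxvne : x v ≠ (m : ℝ) - 2 := by
      have := hxF.2 v (m - 2) (le_refl _)
      rwa [hcast] at this
    have hxv : (m : ℝ) - 2 < x v := lt_of_le_of_ne hle (Ne.symm hxvne)
    obtain ⟨v₀, hv₀⟩ := Finite.exists_max x
    have hxv₀ : (m : ℝ) - 2 < x v₀ := lt_of_lt_of_le hxv (hv₀ v)
    set p : ℝ → (V → ℝ) := fun t => Function.update x v₀ (x v₀ + t) with hp
    have hpc : Continuous p := by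
      apply continuous_pi
      intro w
      rcases eq_or_ne w v₀ with rfl | hw
      · simp only [hp, Function.update_self]; exact continuous_const.add continuous_id
      · simp only [hp, Function.update_apply, if_neg hw]
        exact continuous_const
    have hsub : p '' Ici 0 ⊆ F := by
      rintro _ ⟨t, ht, rfl⟩
      constructor
      · intro u w huw
        rcases eq_or_ne u v₀ with rfl | hu
        · have hwne : w ≠ u := (G.ne_of_adj huw).symm
          have h1 : x w ≠ x u := hxF.1 w u huw.symm
          have h2 : x w ≤ x u := hv₀ w
          simp only [hp, Function.update_apply, if_neg hwne, Function.update_self]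
          have : x w < x u + t := by
            rcases lt_of_le_of_ne h2 h1 with h
            simp at ht; linarith
          exact (ne_of_lt this).symm
        · rcases eq_or_ne w v₀ with rfl | hw
          · have h1 : x u ≠ x w := hxF.1 u w huw
            have h2 : x u ≤ x w := hv₀ u
            simp only [hp, Function.update_apply, if_neg hu, Function.update_self]
            have : x u < x w + t := by
              rcases lt_of_le_of_ne h2 h1 with h
              simp at ht; linarith
            exact ne_of_lt this
          · simp only [hp, Function.update_apply, if_neg hu, if_neg hw]
            exact hxF.1 u w huw
      · intro w i hi
        rcases eq_or_ne w v₀ with rfl | hw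
        · simp only [hp, Function.update_self]
          have hicast : (i : ℝ) ≤ (m : ℝ) - 2 := by
            calc (i : ℝ) ≤ ((m - 2 : ℕ) : ℝ) := by exact_mod_cast hi
            _ = (m : ℝ) - 2 := hcast
          have : (i : ℝ) < x w + t := by simp at ht; linarith
          exact (ne_of_lt this).symm
        · simp only [hp, Function.update_apply, if_neg hw]
          exact hxF.2 w i hi
    have hxp : x ∈ p '' Ici 0 := ⟨0, self_mem_Ici, by simp [hp]⟩
    have hpre : IsPreconnected (p '' Ici 0) :=
      (isPreconnected_Ici).image p hpc.continuousOn
    have hray : p '' Ici 0 ⊆ connectedComponentIn F x :=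
      hpre.subset_connectedComponentIn hxp hsub
    have hmem : p (M + 1) ∈ connectedComponentIn F x :=
      hray ⟨M + 1, by simp; linarith, rfl⟩
    have := hM _ hmem
    have h1 : ‖p (M + 1) v₀‖ ≤ ‖p (M + 1)‖ := norm_le_pi_norm _ v₀
    have h2 : p (M + 1) v₀ = x v₀ + (M + 1) := by simp [hp]
    rw [h2] at h1
    have : |x v₀ + (M + 1)| ≤ M := le_trans h1 this
    rw [abs_le] at this
    have hm2 : (0:ℝ) ≤ (m:ℝ) - 2 := by
      have : (2:ℝ) ≤ m := by exact_mod_cast hm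
      linarith
    linarith [this.2]
  
end Aux
open Set

section Aux2
variable {V : Type*} [Fintype V] {G : SimpleGraph V} {m : ℕ}


/-- Pattern constancy on a bounded component. -/
lemma pattern_const (hm : 2 ≤ m) {x₀ : V → ℝ} (hx₀ : x₀ ∈ arrComplement G m)
    (hb : Bornology.IsBounded (connectedComponentIn (arrComplement G m) x₀))
    {x x' : V → ℝ} (hx : x ∈ connectedComponentIn (arrComplement G m) x₀)
    (hx' : x' ∈ connectedComponentIn (arrComplement G m) x₀) :
    (∀ u w, G.Adj u w → (x w < x u ↔ x' w < x' u)) ∧ ∀ v, ⌈x v⌉ = ⌈x' v⌉ := by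
  classical
  set F := arrComplement G m with hF
  set C := connectedComponentIn F x₀ with hC
  have hCF : C ⊆ F := connectedComponentIn_subset F x₀
  have hpre : IsPreconnected C := isPreconnected_connectedComponentIn
  constructor
  · -- orientation constancy
    intro u w huw
    have key : ∀ y y' : V → ℝ, y ∈ C → y' ∈ C → y w < y u → y' w < y' u := by
      intro y y' hy hy' hlt
      by_contra hle
      push_neg at hle
      have hne' : y' u ≠ y' w := (hCF hy').1 u w huw
      have hlt' : y' u < y' w := lt_of_le_of_ne hle hne'
      have hf : ContinuousOn (fun z : V → ℝ => z u - z w) C :=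
        ((continuous_apply u).sub (continuous_apply w)).continuousOn
      have hIcc : Icc (y' u - y' w) (y u - y w) ⊆ (fun z : V → ℝ => z u - z w) '' C :=
        hpre.intermediate_value hy' hy hf
      have h0 : (0 : ℝ) ∈ Icc (y' u - y' w) (y u - y w) := ⟨by linarith, by linarith⟩
      obtain ⟨z, hz, hz0⟩ := hIcc h0
      have := (hCF hz).1 u w huw
      exact this (by linarith [sub_eq_zero.mp hz0])
    constructor
    · intro h; exact key x x' hx hx' h
    · intro h; exact key x' x hx' hx h
  · -- ceiling constancy
    intro v
    have key : ∀ y y' : V → ℝ, y ∈ C → y' ∈ C → ⌈y v⌉ ≤ ⌈y' v⌉ := by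
      intro y y' hy hy'
      by_contra hlt
      push_neg at hlt
      set k := ⌈y' v⌉ with hk
      have h1 : y' v ≤ (k : ℝ) := Int.le_ceil _
      have h2 : (k : ℝ) < y v := by
        have : k + 1 ≤ ⌈y v⌉ := hlt
        have h3 : ((⌈y v⌉ : ℝ)) < y v + 1 := Int.ceil_lt_add_one _
        have : ((k : ℝ)) + 1 ≤ (⌈y v⌉ : ℝ) := by exact_mod_cast this
        linarith
      have hf : ContinuousOn (fun z : V → ℝ => z v) C := (continuous_apply v).continuousOn
      have hIcc : Icc (y' v) (y v) ⊆ (fun z : V → ℝ => z v) '' C :=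
        hpre.intermediate_value hy' hy hf
      obtain ⟨z, hz, hzk⟩ := hIcc ⟨h1, h2.le⟩
      -- k is in [1, m-2]
      have hy'b := coord_mem_Ioo hm hx₀ hb hy' v
      have hk1 : 1 ≤ k := Int.ceil_pos.mpr hy'b.1
      have hkm : k ≤ (m : ℤ) - 2 := by
        apply Int.ceil_le.mpr
        push_cast
        linarith [hy'b.2]
      have hcontra := (hCF hz).2 v k.toNat (by
        rw [← Nat.cast_le (α := ℤ), Int.toNat_of_nonneg (by omega)] at *
        · omega)
      apply hcontra
      have : z v = (k : ℝ) := hzk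
      rw [this, show ((k.toNat : ℕ) : ℝ) = ((k.toNat : ℤ) : ℝ) by push_cast; ring,
        Int.toNat_of_nonneg (by omega)]
    exact le_antisymm (key x x' hx hx') (key x' x hx' hx)

end Aux2
open Set

section Aux3
variable {V : Type*} [Fintype V] {G : SimpleGraph V} {m : ℕ}


/-- L2: the pattern of a point of a bounded component is a compatible pair. -/
lemma pattern_mem_compat (hm : 2 ≤ m) {x₀ : V → ℝ} (hx₀ : x₀ ∈ arrComplement G m)
    (hb : Bornology.IsBounded (connectedComponentIn (arrComplement G m) x₀))
    {x : V → ℝ} (hx : x ∈ connectedComponentIn (arrComplement G m) x₀) :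
    IsOrientation G (fun u w => G.Adj u w ∧ x w < x u) ∧
    IsAcyclicRel (fun u w => G.Adj u w ∧ x w < x u) ∧
    (∀ v, 1 ≤ ⌈x v⌉ ∧ ⌈x v⌉ ≤ (m : ℤ) - 2) ∧
    (∀ u w, (G.Adj u w ∧ x w < x u) → ⌈x w⌉ ≤ ⌈x u⌉) := by
  have hxF : x ∈ arrComplement G m := connectedComponentIn_subset _ _ hx
  refine ⟨⟨fun u w h => h.1, fun u w huw => ?_⟩, ?_, ?_, ?_⟩
  · have hne : x u ≠ x w := hxF.1 u w huw
    constructor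
    · rintro ⟨-, h⟩ ⟨-, h'⟩; linarith
    · intro h
      refine ⟨huw, ?_⟩
      rcases lt_or_gt_of_ne hne with h' | h'
      · exact absurd ⟨huw.symm, h'⟩ h
      · exact h'
  · intro v hv
    have : ∀ a b, Relation.TransGen (fun u w => G.Adj u w ∧ x w < x u) a b → x b < x a := by
      intro a b h
      induction h with
      | single h => exact h.2
      | tail _ h ih => exact lt_trans h.2 ih
    exact absurd (this v v hv) (lt_irrefl _)
  · intro v
    have hbox := coord_mem_Ioo hm hx₀ hb hx v
    constructor
    · exact Int.ceil_pos.mpr hbox.1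
    · apply Int.ceil_le.mpr; push_cast; linarith [hbox.2]
  · intro u w h
    exact Int.ceil_le_ceil h.2.le

/-- L3: canonical point of a compatible pair. -/
lemma canonical_point (hm : 2 ≤ m) (r : V → V → Prop) (σ : V → ℤ)
    (hor : IsOrientation G r) (hacyc : IsAcyclicRel r)
    (hcol : ∀ v, 1 ≤ σ v ∧ σ v ≤ (m : ℤ) - 2) (hcomp : ∀ u w, r u w → σ w ≤ σ u) :
    ∃ y : V → ℝ, y ∈ arrComplement G m ∧
      ((fun u w => G.Adj u w ∧ y w < y u) = r) ∧ ((fun v => ⌈y v⌉) = σ) ∧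
      (∀ v, 0 ≤ y v ∧ y v ≤ (m : ℝ) - 2) := by
  classical
  set n := Fintype.card V with hn
  set h : V → ℕ := fun v => (Finset.univ.filter (fun u => Relation.TransGen r v u)).card with hh
  have hstep : ∀ a b, r a b → h b < h a := by
    intro a b hab
    apply Finset.card_lt_card
    constructor
    · intro z hz
      simp only [hh, Finset.mem_filter, Finset.mem_univ, true_and] at hz ⊢
      exact (Relation.TransGen.single hab).trans hz
    · intro hsub
      have : b ∈ Finset.univ.filter (fun u => Relation.TransGen r a u) := by
        simp only [Finset.mem_filter, Finset.mem_univ, true_and]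
        exact Relation.TransGen.single hab
      have hb' := hsub this
      simp only [hh, Finset.mem_filter, Finset.mem_univ, true_and] at hb'
      exact hacyc b hb'
  set t : V → ℝ := fun v => ((h v : ℝ) + 1) / ((n : ℝ) + 2) with ht
  have hden : (0 : ℝ) < (n : ℝ) + 2 := by positivity
  have ht0 : ∀ v, 0 < t v := fun v => by positivity
  have ht1 : ∀ v, t v < 1 := by
    intro v
    rw [ht, div_lt_one hden]
    have : h v ≤ n := by
      rw [hn, ← Finset.card_univ]; exact Finset.card_filter_le _ _
    push_cast
    linarith [this, (Nat.cast_le (α := ℝ)).mpr this]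
  have htmono : ∀ a b, h b < h a → t b < t a := by
    intro a b hab
    have hc : (h b : ℝ) < h a := by exact_mod_cast hab
    rw [ht, div_lt_div_iff₀ hden hden]
    nlinarith
  set y : V → ℝ := fun v => (σ v : ℝ) - 1 + t v with hy
  have hylt : ∀ a b, r a b → y b < y a := by
    intro a b hab
    have hσ : σ b ≤ σ a := hcomp a b hab
    rcases eq_or_lt_of_le hσ with heq | hlt
    · have := htmono a b (hstep a b hab)
      simp only [hy, heq]
      linarith
    · have : (σ b : ℝ) + 1 ≤ (σ a : ℝ) := by exact_mod_cast hlt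
      have := ht0 a; have := ht1 b
      simp only [hy]; linarith
  have hbox : ∀ v, (σ v : ℝ) - 1 < y v ∧ y v < (σ v : ℝ) := by
    intro v
    constructor
    · simp only [hy]; linarith [ht0 v]
    · simp only [hy]; linarith [ht1 v]
  have hror : ∀ u w, G.Adj u w → r u w ∨ r w u := by
    intro u w huw
    by_cases hr : r u w
    · exact Or.inl hr
    · refine Or.inr (by_contra fun hc => hr ((hor.2 u w huw).mpr hc))
  refine ⟨y, ⟨?_, ?_⟩, ?_, ?_, ?_⟩
  · intro u w huw
    rcases hror u w huw with hr | hr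
    · exact ne_of_gt (hylt u w hr)
    · exact ne_of_lt (hylt w u hr)
  · intro v i hi hcontra
    have h1 := (hbox v).1
    have h2 := (hbox v).2
    rw [hcontra] at h1 h2
    have hi1 : (i : ℤ) < σ v := by exact_mod_cast h2
    have hi2 : σ v - 1 < (i : ℤ) := by exact_mod_cast h1
    omega
  · funext u w
    apply propext
    constructor
    · rintro ⟨huw, hlt⟩
      rcases hror u w huw with hr | hr
      · exact hr
      · exact absurd (hylt w u hr) (by linarith)
    · intro hr
      exact ⟨hor.1 u w hr, hylt u w hr⟩
  · funext v
    rw [Int.ceil_eq_iff]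
    exact ⟨(hbox v).1, (hbox v).2.le⟩
  · intro v
    have h1 := (hbox v).1
    have h2 := (hbox v).2
    have hc1 : (1 : ℝ) ≤ (σ v : ℝ) := by exact_mod_cast (hcol v).1
    have hc2 : (σ v : ℝ) ≤ (m : ℝ) - 2 := by exact_mod_cast (hcol v).2
    exact ⟨by linarith, by linarith⟩

/-- L4: boundedness of the component of a point in the box. -/
lemma comp_bounded (hm : 2 ≤ m) {y : V → ℝ} (hyF : y ∈ arrComplement G m)
    (hybox : ∀ v, 0 ≤ y v ∧ y v ≤ (m : ℝ) - 2) :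
    Bornology.IsBounded (connectedComponentIn (arrComplement G m) y) := by
  set F := arrComplement G m with hF
  set C := connectedComponentIn F y with hC
  have hCF : C ⊆ F := connectedComponentIn_subset F y
  have hpre : IsPreconnected C := isPreconnected_connectedComponentIn
  have hyC : y ∈ C := mem_connectedComponentIn hyF
  have hcast : ((m - 2 : ℕ) : ℝ) = (m : ℝ) - 2 := by
    push_cast [Nat.cast_sub hm]; ring
  have claim : ∀ z ∈ C, ∀ v, 0 ≤ z v ∧ z v ≤ (m : ℝ) - 2 := by
    intro z hz v
    have hf : ContinuousOn (fun w : V → ℝ => w v) C := (continuous_apply v).continuousOn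
    constructor
    · by_contra hlt
      push_neg at hlt
      have h0 : (0 : ℝ) ∈ Icc (z v) (y v) := ⟨hlt.le, (hybox v).1⟩
      obtain ⟨w, hw, hw0⟩ := hpre.intermediate_value hz hyC hf h0
      exact (hCF hw).2 v 0 (by omega) (by exact_mod_cast hw0)
    · by_contra hlt
      push_neg at hlt
      have h0 : ((m : ℝ) - 2) ∈ Icc (y v) (z v) := ⟨(hybox v).2, hlt.le⟩
      obtain ⟨w, hw, hw0⟩ := hpre.intermediate_value hyC hz hf h0
      refine (hCF hw).2 v (m - 2) le_rfl ?_
      rw [hcast]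
      exact hw0
  rw [isBounded_iff_forall_norm_le]
  refine ⟨m, fun z hz => ?_⟩
  rw [pi_norm_le_iff_of_nonneg (by positivity)]
  intro v
  obtain ⟨h1, h2⟩ := claim z hz v
  rw [Real.norm_eq_abs, abs_le]
  have : (2 : ℝ) ≤ m := by exact_mod_cast hm
  constructor <;> linarith

end Aux3
open Set

section Aux4
variable {V : Type*} [Fintype V] {G : SimpleGraph V} {m : ℕ}


lemma combo_lt {a b p q s u : ℝ} (ha : 0 ≤ a) (hb : 0 ≤ b) (hab : a + b = 1)
    (h1 : p < q) (h2 : s < u) : a * p + b * s < a * q + b * u := by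
  rcases eq_or_lt_of_le ha with h | h
  · have hb1 : b = 1 := by linarith
    rw [← h, hb1]; simpa using h2
  · have h3 : a * p < a * q := mul_lt_mul_of_pos_left h1 h
    have h4 : b * s ≤ b * u := mul_le_mul_of_nonneg_left h2.le hb
    linarith

lemma lt_ceil_of (hm : 2 ≤ m) {x : V → ℝ} (hxF : x ∈ arrComplement G m) {v : V}
    (h0 : 0 < x v) (h2 : x v < (m : ℝ) - 2) : x v < (⌈x v⌉ : ℝ) := by
  refine lt_of_le_of_ne (Int.le_ceil _) fun heq => ?_
  set k := ⌈x v⌉ with hk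
  have hk1 : 1 ≤ k := Int.ceil_pos.mpr h0
  have hkm : k ≤ (m : ℤ) - 2 := Int.ceil_le.mpr (by push_cast; linarith)
  refine hxF.2 v k.toNat (by omega) ?_
  rw [heq]
  exact_mod_cast congrArg (Int.cast : ℤ → ℝ) (Int.toNat_of_nonneg (by omega : (0:ℤ) ≤ k)).symm

lemma same_pattern_same_comp (hm : 2 ≤ m) {x₁ x₂ : V → ℝ}
    (h₁ : x₁ ∈ arrComplement G m) (h₂ : x₂ ∈ arrComplement G m)
    (hb₁ : Bornology.IsBounded (connectedComponentIn (arrComplement G m) x₁))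
    (hb₂ : Bornology.IsBounded (connectedComponentIn (arrComplement G m) x₂))
    (hor : (fun u w => G.Adj u w ∧ x₁ w < x₁ u) = (fun u w => G.Adj u w ∧ x₂ w < x₂ u))
    (hceil : ∀ v, ⌈x₁ v⌉ = ⌈x₂ v⌉) :
    connectedComponentIn (arrComplement G m) x₁
      = connectedComponentIn (arrComplement G m) x₂ := by
  classical
  set F := arrComplement G m with hF
  set R : Set (V → ℝ) := {z | (∀ u w, G.Adj u w → x₁ w < x₁ u → z w < z u) ∧
    ∀ v, ((⌈x₁ v⌉ : ℝ) - 1 < z v ∧ z v < (⌈x₁ v⌉ : ℝ))} with hR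
  have hbox₁ : ∀ v, 0 < x₁ v ∧ x₁ v < (m:ℝ) - 2 :=
    fun v => coord_mem_Ioo hm h₁ hb₁ (mem_connectedComponentIn h₁) v
  have hbox₂ : ∀ v, 0 < x₂ v ∧ x₂ v < (m:ℝ) - 2 :=
    fun v => coord_mem_Ioo hm h₂ hb₂ (mem_connectedComponentIn h₂) v
  have hx₁R : x₁ ∈ R := by
    refine ⟨fun u w _ h => h, fun v => ⟨?_, ?_⟩⟩
    · linarith [Int.ceil_lt_add_one (x₁ v)]
    · exact lt_ceil_of hm h₁ (hbox₁ v).1 (hbox₁ v).2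
  have hx₂R : x₂ ∈ R := by
    refine ⟨fun u w huw h => ?_, fun v => ?_⟩
    · have := congr_fun (congr_fun hor u) w
      exact ((show (G.Adj u w ∧ x₁ w < x₁ u) ↔ (G.Adj u w ∧ x₂ w < x₂ u) from this ▸ Iff.rfl).mp
        ⟨huw, h⟩).2
    · rw [hceil v]
      constructor
      · linarith [Int.ceil_lt_add_one (x₂ v)]
      · exact lt_ceil_of hm h₂ (hbox₂ v).1 (hbox₂ v).2
  have hRF : R ⊆ F := by
    rintro z ⟨hz1, hz2⟩
    constructor
    · intro u w huw
      have hne : x₁ u ≠ x₁ w := h₁.1 u w huw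
      rcases lt_or_gt_of_ne hne with h | h
      · exact ne_of_lt (hz1 w u huw.symm h)
      · exact ne_of_gt (hz1 u w huw h)
    · intro v i hi hzi
      obtain ⟨ha, hb'⟩ := hz2 v
      rw [hzi] at ha hb'
      have h1' : (i : ℤ) < ⌈x₁ v⌉ := by exact_mod_cast hb'
      have h2' : (⌈x₁ v⌉ : ℤ) < (i : ℤ) + 1 := by
        have : ((⌈x₁ v⌉ : ℝ)) < (i : ℝ) + 1 := by linarith
        exact_mod_cast this
      omega
  have hRconv : Convex ℝ R := by
    intro z₁ hz₁ z₂ hz₂ a b ha hb hab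
    refine ⟨fun u w huw h => ?_, fun v => ?_⟩
    · have e1 := hz₁.1 u w huw h
      have e2 := hz₂.1 u w huw h
      simp only [Pi.add_apply, Pi.smul_apply, smul_eq_mul]
      exact combo_lt ha hb hab e1 e2
    · obtain ⟨a1, a2⟩ := hz₁.2 v
      obtain ⟨b1, b2⟩ := hz₂.2 v
      simp only [Pi.add_apply, Pi.smul_apply, smul_eq_mul]
      constructor
      · have h5 := combo_lt ha hb hab a1 b1
        have hid : a * ((⌈x₁ v⌉:ℝ) - 1) + b * ((⌈x₁ v⌉:ℝ) - 1) = (⌈x₁ v⌉:ℝ) - 1 := by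
          rw [← add_mul, hab, one_mul]
        linarith
      · have h5 := combo_lt ha hb hab a2 b2
        have hid : a * ((⌈x₁ v⌉:ℝ)) + b * ((⌈x₁ v⌉:ℝ)) = (⌈x₁ v⌉:ℝ) := by
          rw [← add_mul, hab, one_mul]
        linarith
  have hx₂mem : x₂ ∈ connectedComponentIn F x₁ :=
    hRconv.isPreconnected.subset_connectedComponentIn hx₁R hRF hx₂R
  exact connectedComponentIn_eq hx₂mem

end Aux4

/-- The map sending a bounded region of `A(G;m)` to the orientation `u → w` iff `x_u > x_w`
and coloring `σ(v) = ⌈x_v⌉` (for `x` a point of the region) is a bijection onto pairs of an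
acyclic orientation with compatible coloring. -/

theorem bounded_regions_biject_compatible_pairs {V : Type*} [Fintype V]
    (G : SimpleGraph V) (m : ℕ) (hm : 2 ≤ m) :
    ∃ e : BoundedComponents G m ≃ CompatPairs G m,
      ∀ (C : BoundedComponents G m) (x : V → ℝ), x ∈ C.1 →
        ((e C).1.1 = fun u w => G.Adj u w ∧ x w < x u) ∧ ∀ v, (e C).1.2 v = ⌈x v⌉ := by
  classical
  have hex : ∀ C : BoundedComponents G m,
      ∃ x, x ∈ arrComplement G m ∧ C.1 = connectedComponentIn (arrComplement G m) x :=
    fun C => by obtain ⟨x, h1, h2⟩ := C.2.1; exact ⟨x, h1, h2⟩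
  choose x₀ hx₀F hx₀C using hex
  have hbC : ∀ C : BoundedComponents G m,
      Bornology.IsBounded (connectedComponentIn (arrComplement G m) (x₀ C)) :=
    fun C => (hx₀C C) ▸ C.2.2
  set f : BoundedComponents G m → CompatPairs G m := fun C =>
    ⟨⟨fun u w => G.Adj u w ∧ x₀ C w < x₀ C u, fun v => ⌈x₀ C v⌉⟩,
      pattern_mem_compat hm (hx₀F C) (hbC C) (mem_connectedComponentIn (hx₀F C))⟩ with hf
  have hspec : ∀ (C : BoundedComponents G m) (x : V → ℝ), x ∈ C.1 →
      ((f C).1.1 = fun u w => G.Adj u w ∧ x w < x u) ∧ ∀ v, (f C).1.2 v = ⌈x v⌉ := by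
    intro C x hx
    have hx' : x ∈ connectedComponentIn (arrComplement G m) (x₀ C) := (hx₀C C) ▸ hx
    obtain ⟨h1, h2⟩ := pattern_const hm (hx₀F C) (hbC C)
      (mem_connectedComponentIn (hx₀F C)) hx'
    constructor
    · funext u w
      apply propext
      show (G.Adj u w ∧ x₀ C w < x₀ C u) ↔ (G.Adj u w ∧ x w < x u)
      constructor
      · rintro ⟨ha, hl⟩; exact ⟨ha, (h1 u w ha).mp hl⟩
      · rintro ⟨ha, hl⟩; exact ⟨ha, (h1 u w ha).mpr hl⟩
    · exact h2
  refine ⟨Equiv.ofBijective f ⟨?_, ?_⟩, fun C x hx => hspec C x hx⟩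
  · intro C₁ C₂ hff
    have h1 : (f C₁).1.1 = (f C₂).1.1 := by rw [hff]
    have h2 : (f C₁).1.2 = (f C₂).1.2 := by rw [hff]
    have hor : (fun u w => G.Adj u w ∧ x₀ C₁ w < x₀ C₁ u)
        = (fun u w => G.Adj u w ∧ x₀ C₂ w < x₀ C₂ u) := h1
    have hceil : ∀ v, ⌈x₀ C₁ v⌉ = ⌈x₀ C₂ v⌉ := fun v => congr_fun h2 v
    have heq := same_pattern_same_comp hm (hx₀F C₁) (hx₀F C₂) (hbC C₁) (hbC C₂) hor hceil
    apply Subtype.ext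
    rw [hx₀C C₁, hx₀C C₂, heq]
  · rintro ⟨⟨r, σ⟩, hor, hacyc, hcol, hcomp⟩
    obtain ⟨y, hyF, hyr, hyσ, hybox⟩ := canonical_point hm r σ hor hacyc hcol hcomp
    refine ⟨⟨connectedComponentIn (arrComplement G m) y, ⟨y, hyF, rfl⟩,
      comp_bounded hm hyF hybox⟩, ?_⟩
    set C : BoundedComponents G m := ⟨connectedComponentIn (arrComplement G m) y,
      ⟨y, hyF, rfl⟩, comp_bounded hm hyF hybox⟩ with hC
    have hyC : y ∈ C.1 := mem_connectedComponentIn hyF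
    obtain ⟨h1, h2⟩ := hspec C y hyC
    apply Subtype.ext
    refine Prod.ext ?_ ?_
    · show (f C).1.1 = r
      rw [h1, hyr]
    · show (f C).1.2 = σ
      funext v
      rw [h2 v]
      exact congr_fun hyσ v
end
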